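/- arXiv:2108.04464 — 7 statements merged into one kernel-verified Lean document; each statement's English description precedes it below -/
import Mathlib

section
/- Let X be a real-valued random variable with cdf F_X and quantile function F_X^{-1}, and let F₁ be a continuous cdf on ℝ, extended by F₁(+∞) := 1. Then sup_{z∈ℝ} ( F₁(z) − F_X(z) ) = sup_{t∈(0,1]} ( F₁(F_X^{-1}(t)) − t ). -/
open MeasureTheory Filter Topology

/-- The (generalized, extended-real-valued) quantile function of a distribution function
`F : ℝ → ℝ`: `F⁻¹(t) = inf {z ∈ ℝ : F(z) ≥ t}`, with the convention `inf ∅ = +∞`. -/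
noncomputable def quantileE (F : ℝ → ℝ) (t : ℝ) : EReal :=
  sInf {y : EReal | ∃ x : ℝ, y = (x : EReal) ∧ t ≤ F x}

/-- Extension of a cdf `F₁ : ℝ → ℝ` to the extended reals, with `F₁(+∞) := 1`
(and `F₁(−∞) := 0`). -/
noncomputable def extendCdf (F : ℝ → ℝ) : EReal → ℝ := fun w =>
  if w = ⊤ then 1 else if w = ⊥ then 0 else F w.toReal

lemma ereal_cases (x : EReal) : x = ⊥ ∨ x = ⊤ ∨ ∃ r : ℝ, x = (r : EReal) := by
  induction x using EReal.rec with
  | bot => exact Or.inl rfl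
  | coe r => exact Or.inr (Or.inr ⟨r, rfl⟩)
  | top => exact Or.inr (Or.inl rfl)

lemma quantileE_ge {F : ℝ → ℝ} (hF : Monotone F) {t z : ℝ} (h : F z < t) :
    (z : EReal) ≤ quantileE F t := by
  refine le_sInf fun y hy => ?_
  obtain ⟨x, rfl, hx⟩ := hy
  exact EReal.coe_le_coe_iff.2 (le_of_not_gt fun hxz => absurd (hF hxz.le) (by linarith))

lemma quantileE_le {F : ℝ → ℝ} {t z : ℝ} (h : t ≤ F z) :
    quantileE F t ≤ (z : EReal) :=
  sInf_le ⟨z, rfl, h⟩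

/-- For a random variable `X` with cdf `F_X` and quantile function `F_X⁻¹`,
and a continuous cdf `F₁` on `ℝ` extended by `F₁(+∞) := 1`,
`sup_{z∈ℝ} (F₁(z) − F_X(z)) = sup_{t∈(0,1]} (F₁(F_X⁻¹(t)) − t)`. -/
theorem sup_cdf_eq_sup_quantile {Ω : Type*} [MeasurableSpace Ω]
    (P : Measure Ω) [IsProbabilityMeasure P]
    (X : Ω → ℝ) (hX : Measurable X)
    (FX : ℝ → ℝ) (hFX : FX = fun z => (P {ω | X ω ≤ z}).toReal)
    (F₁ : ℝ → ℝ) (hF₁mono : Monotone F₁) (hF₁cont : Continuous F₁)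
    (hF₁bot : Tendsto F₁ atBot (𝓝 0)) (hF₁top : Tendsto F₁ atTop (𝓝 1)) :
    (⨆ z : ℝ, (F₁ z - FX z))
      = ⨆ t : Set.Ioc (0 : ℝ) 1, (extendCdf F₁ (quantileE FX (t : ℝ)) - (t : ℝ)) := by
  -- basic facts about F₁
  have hF10 : ∀ x, 0 ≤ F₁ x := fun x =>
    le_of_tendsto hF₁bot (eventually_atBot.2 ⟨x, fun y hy => hF₁mono hy⟩)
  have hF11 : ∀ x, F₁ x ≤ 1 := fun x =>
    ge_of_tendsto hF₁top (eventually_atTop.2 ⟨x, fun y hy => hF₁mono hy⟩)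
  -- basic facts about FX
  have hFX0 : ∀ z, 0 ≤ FX z := fun z => by rw [hFX]; positivity
  have hFX1 : ∀ z, FX z ≤ 1 := fun z => by
    rw [hFX]
    exact ENNReal.toReal_le_of_le_ofReal zero_le_one (by simpa using prob_le_one)
  have hFXmono : Monotone FX := fun a b hab => by
    rw [hFX]
    exact ENNReal.toReal_le_toReal (measure_ne_top _ _) (measure_ne_top _ _) |>.2
      (measure_mono fun ω hω => le_trans hω hab)
  -- FX is the cdf of the pushforward measure
  have hmap : IsProbabilityMeasure (P.map X) := Measure.isProbabilityMeasure_map hX.aemeasurable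
  have hFXcdf : FX = ProbabilityTheory.cdf (P.map X) := by
    funext z
    rw [hFX, ProbabilityTheory.cdf_eq_real, measureReal_def, Measure.map_apply hX measurableSet_Iic]
    rfl
  have hFXbot : Tendsto FX atBot (𝓝 0) := by
    rw [hFXcdf]; exact ProbabilityTheory.tendsto_cdf_atBot _
  -- extendCdf bounds
  have hext0 : ∀ w, 0 ≤ extendCdf F₁ w := fun w => by
    unfold extendCdf; split_ifs <;> simp [hF10]
  have hext1 : ∀ w, extendCdf F₁ w ≤ 1 := fun w => by
    unfold extendCdf; split_ifs <;> simp [hF11]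
  have hextcoe : ∀ r : ℝ, extendCdf F₁ ((r : ℝ) : EReal) = F₁ r := fun r => by
    unfold extendCdf
    rw [if_neg (by simp), if_neg (by simp)]
    simp
  -- quantile not ⊥ for t > 0
  have hQnebot : ∀ t : ℝ, 0 < t → quantileE FX t ≠ ⊥ := by
    intro t ht hbot
    obtain ⟨z₀, hz₀⟩ := (hFXbot.eventually (eventually_lt_nhds ht)).exists
    have := quantileE_ge hFXmono hz₀
    rw [hbot] at this
    exact absurd this (by simp [EReal.coe_ne_bot, le_bot_iff])
  -- index set nonempty
  have hne : Nonempty (Set.Ioc (0:ℝ) 1) := ⟨⟨1, by norm_num⟩⟩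
  -- bounded above
  have hBf : BddAbove (Set.range fun z : ℝ => F₁ z - FX z) := by
    refine ⟨1, ?_⟩
    rintro _ ⟨z, rfl⟩
    simp only
    have h1 := hF11 z
    have h2 := hFX0 z
    linarith
  have hBg : BddAbove (Set.range fun t : Set.Ioc (0:ℝ) 1 =>
      extendCdf F₁ (quantileE FX (t : ℝ)) - (t : ℝ)) := by
    refine ⟨1, ?_⟩
    rintro _ ⟨⟨t, ht⟩, rfl⟩
    simp only
    have h1 := hext1 (quantileE FX t)
    linarith [ht.1]
  set A := ⨆ z : ℝ, (F₁ z - FX z) with hA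
  set B := ⨆ t : Set.Ioc (0 : ℝ) 1, (extendCdf F₁ (quantileE FX (t : ℝ)) - (t : ℝ)) with hB
  -- B ≥ 0
  have hB0 : (0:ℝ) ≤ B := by
    refine le_of_forall_pos_le_add fun ε hε => ?_
    have hmem : min ε 1 ∈ Set.Ioc (0:ℝ) 1 := ⟨lt_min hε one_pos, min_le_right _ _⟩
    have hle := le_ciSup hBg (⟨min ε 1, hmem⟩ : Set.Ioc (0:ℝ) 1)
    have := hext0 (quantileE FX (min ε 1))
    simp only at hle
    have : -(min ε 1) ≤ B := by linarith
    have hmin : min ε 1 ≤ ε := min_le_left _ _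
    linarith
  refine le_antisymm ?_ ?_
  · -- A ≤ B
    refine ciSup_le fun z => ?_
    refine le_of_forall_pos_le_add fun ε hε => ?_
    by_cases hcase : FX z + ε ≤ 1
    · set t := FX z + ε with ht
      have htmem : t ∈ Set.Ioc (0:ℝ) 1 := ⟨by have := hFX0 z; linarith, hcase⟩
      have hzQ : (z : EReal) ≤ quantileE FX t := quantileE_ge hFXmono (by linarith)
      have hge : F₁ z ≤ extendCdf F₁ (quantileE FX t) := by
        rcases ereal_cases (quantileE FX t) with hb | htp | ⟨q, hq⟩
        · rw [hb] at hzQ; exact absurd hzQ (by simp [le_bot_iff])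
        · rw [htp]; unfold extendCdf; simp [hF11]
        · rw [hq] at hzQ ⊢
          rw [hextcoe]
          exact hF₁mono (EReal.coe_le_coe_iff.1 hzQ)
      have hle := le_ciSup hBg (⟨t, htmem⟩ : Set.Ioc (0:ℝ) 1)
      simp only at hle
      linarith
    · have := hFX1 z; have := hF11 z
      linarith
  · -- B ≤ A
    refine ciSup_le fun ⟨t, ht⟩ => ?_
    simp only
    rcases ereal_cases (quantileE FX t) with hb | htp | ⟨q, hq⟩
    · exact absurd hb (hQnebot t ht.1)
    · -- quantile = ⊤ : all FX x < t
      have hall : ∀ x, FX x < t := by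
        intro x
        by_contra h
        have := quantileE_le (F := FX) (le_of_not_gt h)
        rw [htp] at this
        exact EReal.coe_ne_top x (top_le_iff.1 this)
      rw [htp]
      have hext : extendCdf F₁ (⊤ : EReal) = 1 := by unfold extendCdf; simp
      rw [hext]
      refine le_of_forall_pos_le_add fun ε hε => ?_
      obtain ⟨x, hx⟩ := (hF₁top.eventually (eventually_gt_nhds (by linarith : (1:ℝ) - ε < 1))).exists
      have hle := le_ciSup hBf x
      have := hall x
      linarith
    · -- quantile = q real
      rw [hq, hextcoe]
      have hlt : ∀ z, z < q → FX z < t := by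
        intro z hz
        by_contra h
        have := quantileE_le (F := FX) (le_of_not_gt h)
        rw [hq] at this
        exact absurd (EReal.coe_le_coe_iff.1 this) (by linarith)
      have htd : Tendsto (fun z => F₁ z - t) (𝓝[<] q) (𝓝 (F₁ q - t)) :=
        (((hF₁cont.tendsto q).mono_left nhdsWithin_le_nhds).sub_const t)
      refine le_of_tendsto htd ?_
      filter_upwards [self_mem_nhdsWithin] with z hz
      have hle := le_ciSup hBf z
      have := hlt z hz
      linarith
end

section
/- Let ρ be a real-valued random variable with ℙ(ρ > 0) = 1, continuous cdf F_ρ, and finite mean (i.e., ∫_0^1 F_ρ^{-1}(s) ds < ∞), let F₁ be a continuous cdf on ℝ, and let x₀ > 0. Consider the problem of maximizing sup_{t∈(0,1]} ( F₁(G(t)) − t ) over all increasing, left-continuous functions G : (0,1] → [0,∞) satisfying the budget constraint ∫_0^1 G(t) F_ρ^{-1}(1−t) dt ≤ x₀. Then: (a) the function r ↦ F₁( x₀ / ∫_r^1 F_ρ^{-1}(1−s) ds ) − r attains its supremum over [0,1) at some r* ∈ [0,1); and (b) setting κ* = x₀ / ∫_{r*}^1 F_ρ^{-1}(1−s) ds,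 the function G*(t) = κ*·1_{{t > r*}} is feasible for the problem and is optimal, i.e., for every feasible G, sup_{t∈(0,1]} ( F₁(G(t)) − t ) ≤ sup_{t∈(0,1]} ( F₁(G*(t)) − t ). -/
open MeasureTheory Filter Topology

/-- The (real-valued) quantile function of a distribution function `F : ℝ → ℝ`:
`F⁻¹(t) = inf {z ∈ ℝ : F(z) ≥ t}`. -/
noncomputable def realQuantile (F : ℝ → ℝ) (t : ℝ) : ℝ :=
  sInf {x : ℝ | t ≤ F x}

/-- Quantile formulation of the robust goal-reaching portfolio selection
problem. Let `ρ > 0` a.s. have continuous cdf `F_ρ` and finite mean (`∫_0^1 F_ρ⁻¹(s) ds < ∞`),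
let `F₁` be a continuous cdf on `ℝ`, and `x₀ > 0`. Maximize
`sup_{t∈(0,1]} (F₁(G(t)) − t)` over increasing, left-continuous `G : (0,1] → [0,∞)` with
`∫_0^1 G(t) F_ρ⁻¹(1−t) dt ≤ x₀`. Then (a) `r ↦ F₁(x₀ / ∫_r^1 F_ρ⁻¹(1−s) ds) − r` attains its
supremum over `[0,1)` at some `r*`; and (b) with `κ* = x₀ / ∫_{r*}^1 F_ρ⁻¹(1−s) ds`, the
function `G* = κ*·1_{(r*,1]}` is feasible and optimal. -/
theorem goal_reaching_quantile_solution {Ω : Type*} [MeasurableSpace Ω]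
    (P : Measure Ω) [IsProbabilityMeasure P]
    (ρ : Ω → ℝ) (hρ : Measurable ρ) (hρpos : P {ω | 0 < ρ ω} = 1)
    (Fρ : ℝ → ℝ) (hFρ : Fρ = fun z => (P {ω | ρ ω ≤ z}).toReal)
    (hFρcont : Continuous Fρ)
    (hmean : IntegrableOn (fun s => realQuantile Fρ s) (Set.Ioo (0 : ℝ) 1))
    (F₁ : ℝ → ℝ) (hF₁mono : Monotone F₁) (hF₁cont : Continuous F₁)
    (hF₁bot : Tendsto F₁ atBot (𝓝 0)) (hF₁top : Tendsto F₁ atTop (𝓝 1))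
    (x₀ : ℝ) (hx₀ : 0 < x₀) :
    ∃ rs ∈ Set.Ico (0 : ℝ) 1,
      -- (a) `rs` maximizes `r ↦ F₁(x₀ / ∫_r^1 F_ρ⁻¹(1−s) ds) − r` over `[0,1)`
      (∀ r ∈ Set.Ico (0 : ℝ) 1,
        F₁ (x₀ / ∫ s in Set.Ioc r 1, realQuantile Fρ (1 - s)) - r ≤
          F₁ (x₀ / ∫ s in Set.Ioc rs 1, realQuantile Fρ (1 - s)) - rs) ∧
      -- (b) with `κ* = x₀ / ∫_{rs}^1 F_ρ⁻¹(1−s) ds`, `G* = κ*·1_{(rs,1]}` is feasible…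
      (∃ κs : ℝ, κs = x₀ / ∫ s in Set.Ioc rs 1, realQuantile Fρ (1 - s) ∧
        (∫⁻ t in Set.Ioc (0 : ℝ) 1,
            ENNReal.ofReal ((if rs < t then κs else 0) * realQuantile Fρ (1 - t)) ∂volume)
          ≤ ENNReal.ofReal x₀ ∧
        -- …and optimal among all feasible quantile functions `G`
        ∀ G : ℝ → ℝ, (∀ t ∈ Set.Ioc (0 : ℝ) 1, 0 ≤ G t) →
          MonotoneOn G (Set.Ioc (0 : ℝ) 1) →
          (∀ t ∈ Set.Ioc (0 : ℝ) 1, Tendsto G (𝓝[<] t) (𝓝 (G t))) →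
          (∫⁻ t in Set.Ioc (0 : ℝ) 1,
              ENNReal.ofReal (G t * realQuantile Fρ (1 - t)) ∂volume) ≤ ENNReal.ofReal x₀ →
          (⨆ t : Set.Ioc (0 : ℝ) 1, (F₁ (G (t : ℝ)) - (t : ℝ)))
            ≤ ⨆ t : Set.Ioc (0 : ℝ) 1,
                (F₁ (if rs < (t : ℝ) then κs else 0) - (t : ℝ))) := by
  -- basic facts about F₁
  have hF₁0 : ∀ x : ℝ, 0 ≤ F₁ x := by
    intro x
    refine le_of_tendsto hF₁bot (eventually_atBot.2 ⟨x, fun y hy => hF₁mono hy⟩)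
  have hF₁1 : ∀ x : ℝ, F₁ x ≤ 1 := by
    intro x
    refine ge_of_tendsto hF₁top (eventually_atTop.2 ⟨x, fun y hy => hF₁mono hy⟩)
  -- basic facts about Fρ
  have hFρmono : Monotone Fρ := by
    intro a b hab
    rw [hFρ]
    exact ENNReal.toReal_mono (measure_ne_top P _)
      (measure_mono fun ω h => le_trans h hab)
  have hFρ0 : Fρ 0 = 0 := by
    have hm : MeasurableSet {ω | 0 < ρ ω} := hρ measurableSet_Ioi
    have h0 : P {ω | ρ ω ≤ 0} = 0 := by
      have hc : {ω | ρ ω ≤ 0} = {ω | 0 < ρ ω}ᶜ := by ext ω; simp [not_lt]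
      rw [hc, measure_compl hm (measure_ne_top P _), hρpos, measure_univ, tsub_self]
    rw [hFρ]; simp only; rw [h0, ENNReal.toReal_zero]
  have hlb : ∀ u : ℝ, 0 < u → ∃ ε > 0, ∀ x, u ≤ Fρ x → ε ≤ x := by
    intro u hu
    have h0 : Fρ 0 < u := by rw [hFρ0]; exact hu
    have hopen : IsOpen {x : ℝ | Fρ x < u} := isOpen_lt hFρcont continuous_const
    obtain ⟨ε, hε, hb⟩ := Metric.isOpen_iff.1 hopen 0 h0
    refine ⟨ε / 2, by linarith, fun x hx => ?_⟩
    by_contra hlt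
    push_neg at hlt
    have h1 : Fρ x ≤ Fρ (ε / 2) := hFρmono hlt.le
    have h2 : (ε / 2 : ℝ) ∈ Metric.ball (0 : ℝ) ε := by
      rw [Metric.mem_ball, Real.dist_eq, sub_zero, abs_of_pos (by linarith)]
      linarith
    have h3 : Fρ (ε / 2) < u := hb h2
    linarith
  have htop : Tendsto Fρ atTop (𝓝 1) := by
    have hm1 : (P.map ρ) Set.univ = 1 := by
      rw [Measure.map_apply hρ MeasurableSet.univ, Set.preimage_univ, measure_univ]
    have h1 : Tendsto (fun x => P {ω | ρ ω ≤ x}) atTop (𝓝 (1 : ENNReal)) := by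
      have h : ∀ x : ℝ, P {ω | ρ ω ≤ x} = (P.map ρ) (Set.Iic x) := fun x => by
        rw [Measure.map_apply hρ measurableSet_Iic]; rfl
      simp_rw [h]
      simpa [hm1] using tendsto_measure_Iic_atTop (P.map ρ)
    have h2 := (ENNReal.tendsto_toReal (by simp : (1 : ENNReal) ≠ ⊤)).comp h1
    rw [hFρ]
    exact h2
  have hne : ∀ u : ℝ, u < 1 → ∃ x, u ≤ Fρ x := by
    intro u hu
    obtain ⟨x, hx⟩ := (htop.eventually (eventually_gt_nhds hu)).exists
    exact ⟨x, hx.le⟩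
  have hqlb : ∀ u : ℝ, 0 < u → u < 1 → 0 < realQuantile Fρ u := by
    intro u hu hu1
    obtain ⟨ε, hε, hlbu⟩ := hlb u hu
    have h1 : ε ≤ realQuantile Fρ u :=
      le_csInf (hne u hu1) (fun y hy => hlbu y hy)
    linarith
  have hqmono : ∀ u v : ℝ, 0 < u → u ≤ v → v < 1 →
      realQuantile Fρ u ≤ realQuantile Fρ v := by
    intro u v hu huv hv1
    obtain ⟨ε, hε, hlbu⟩ := hlb u hu
    exact csInf_le_csInf ⟨ε, fun y hy => hlbu y hy⟩ (hne v hv1)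
      (fun y hy => le_trans huv hy)
  have hq0 : realQuantile Fρ 0 = 0 := by
    have huniv : {x : ℝ | (0 : ℝ) ≤ Fρ x} = Set.univ := by
      ext x; simp [hFρ, ENNReal.toReal_nonneg]
    have hnb : ¬BddBelow (Set.univ : Set ℝ) := by
      rintro ⟨b, hb⟩
      have := hb (Set.mem_univ (b - 1))
      linarith
    rw [realQuantile, huniv, csInf_of_not_bddBelow hnb, Real.sInf_empty]
  set g : ℝ → ℝ := fun s => realQuantile Fρ (1 - s) with hgdef
  have hg0 : ∀ s : ℝ, 0 < s → s ≤ 1 → 0 ≤ g s := by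
    intro s hs hs1
    rcases eq_or_lt_of_le hs1 with h | h
    · simp [hgdef, h, hq0]
    · exact (hqlb (1 - s) (by linarith) (by linarith)).le
  -- integrability of g
  have hmean' : IntegrableOn g (Set.Ioo (0 : ℝ) 1) := by
    have h1 : Integrable ((Set.Ioo (0:ℝ) 1).indicator fun s => realQuantile Fρ s) :=
      (integrable_indicator_iff measurableSet_Ioo).2 hmean
    have h2 := h1.comp_sub_left 1
    have h3 : (fun x => ((Set.Ioo (0:ℝ) 1).indicator fun s => realQuantile Fρ s) (1 - x))
        = (Set.Ioo (0:ℝ) 1).indicator g := by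
      ext x
      by_cases hx : x ∈ Set.Ioo (0:ℝ) 1
      · have hx' : 1 - x ∈ Set.Ioo (0:ℝ) 1 := ⟨by linarith [hx.2], by linarith [hx.1]⟩
        rw [Set.indicator_of_mem hx', Set.indicator_of_mem hx]
      · have hx' : 1 - x ∉ Set.Ioo (0:ℝ) 1 := by
          simp only [Set.mem_Ioo, not_and_or, not_lt] at hx ⊢
          rcases hx with h | h
          · right; linarith
          · left; linarith
        rw [Set.indicator_of_notMem hx', Set.indicator_of_notMem hx]
    rw [h3] at h2
    exact (integrable_indicator_iff measurableSet_Ioo).1 h2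
  have hrIoc : (volume : Measure ℝ).restrict (Set.Ioc (0:ℝ) 1)
      = volume.restrict (Set.Ioo (0:ℝ) 1) :=
    (Measure.restrict_congr_set Ioo_ae_eq_Ioc).symm
  have hgIoc : IntegrableOn g (Set.Ioc (0:ℝ) 1) := by
    rw [IntegrableOn, hrIoc]; exact hmean'
  have hgIcc : IntegrableOn g (Set.Icc (0:ℝ) 1) := by
    rw [IntegrableOn, (Measure.restrict_congr_set Ioo_ae_eq_Icc).symm]; exact hmean'
  -- splitting and continuity of r ↦ ∫_{(r,1]} g
  have hsplit : ∀ a b c : ℝ, 0 ≤ a → a ≤ b → b ≤ c → c ≤ 1 →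
      ∫ s in Set.Ioc a c, g s = (∫ s in Set.Ioc a b, g s) + ∫ s in Set.Ioc b c, g s := by
    intro a b c ha hab hbc hc1
    rw [← setIntegral_union (Set.Ioc_disjoint_Ioc_of_le le_rfl) measurableSet_Ioc
      (hgIoc.mono_set (Set.Ioc_subset_Ioc (by linarith) (by linarith)))
      (hgIoc.mono_set (Set.Ioc_subset_Ioc (by linarith) (by linarith))),
      Set.Ioc_union_Ioc_eq_Ioc hab hbc]
  have hφeq : ∀ r ∈ Set.Icc (0:ℝ) 1, (∫ s in Set.Ioc r 1, g s)
      = (∫ s in Set.Ioc (0:ℝ) 1, g s) - ∫ s in Set.Ioc (0:ℝ) r, g s := by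
    intro r hr
    rw [hsplit 0 r 1 le_rfl hr.1 hr.2 le_rfl]
    ring
  have hφcont : ContinuousOn (fun r => ∫ s in Set.Ioc r 1, g s) (Set.Icc (0:ℝ) 1) := by
    have hψ : ContinuousOn (fun r => ∫ s in Set.Ioc (0:ℝ) r, g s) (Set.Icc (0:ℝ) 1) :=
      intervalIntegral.continuousOn_primitive hgIcc
    exact ContinuousOn.congr (continuousOn_const.sub hψ) (fun r hr => hφeq r hr)
  have hφpos : ∀ r ∈ Set.Ico (0:ℝ) 1, 0 < ∫ s in Set.Ioc r 1, g s := by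
    intro r hr
    set b : ℝ := (r + 1) / 2 with hbdef
    have hrb : r < b := by rw [hbdef]; linarith [hr.2]
    have hb1 : b < 1 := by rw [hbdef]; linarith [hr.2]
    have hb0 : 0 < b := by rw [hbdef]; linarith [hr.1]
    have hqb : 0 < realQuantile Fρ (1 - b) := hqlb _ (by linarith) (by linarith [hr.1])
    have h1 : (b - r) * realQuantile Fρ (1 - b) ≤ ∫ s in Set.Ioc r b, g s := by
      have hc : ∫ _s in Set.Ioc r b, realQuantile Fρ (1 - b)
          = (b - r) * realQuantile Fρ (1 - b) := by
        rw [setIntegral_const, Real.volume_real_Ioc_of_le hrb.le, smul_eq_mul]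
      rw [← hc]
      refine setIntegral_mono_on (integrableOn_const ?_)
        (hgIoc.mono_set (Set.Ioc_subset_Ioc hr.1 hb1.le)) measurableSet_Ioc ?_
      · rw [Real.volume_Ioc]; exact ENNReal.ofReal_ne_top
      · intro s hs
        exact hqmono (1 - b) (1 - s) (by linarith) (by linarith [hs.2])
          (by linarith [hs.1, hr.1])
    have h2 : 0 ≤ ∫ s in Set.Ioc b 1, g s :=
      setIntegral_nonneg measurableSet_Ioc
        (fun s hs => hg0 s (lt_trans hb0 hs.1) hs.2)
    have h3 := hsplit r b 1 hr.1 hrb.le hb1.le le_rfl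
    nlinarith [mul_pos (by linarith : (0:ℝ) < b - r) hqb]
  -- link between the Bochner integral and the lower integral
  have hlint : ∀ r ∈ Set.Ico (0:ℝ) 1,
      (∫⁻ s in Set.Ioc r 1, ENNReal.ofReal (g s))
        = ENNReal.ofReal (∫ s in Set.Ioc r 1, g s) := by
    intro r hr
    rw [← ofReal_integral_eq_lintegral_ofReal
      (hgIoc.mono_set (Set.Ioc_subset_Ioc hr.1 le_rfl))]
    exact (ae_restrict_iff' measurableSet_Ioc).2
      (ae_of_all _ (fun s hs => hg0 s (lt_of_le_of_lt hr.1 hs.1) hs.2))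
  -- the key budget bound
  have hkey : ∀ G : ℝ → ℝ, (∀ t ∈ Set.Ioc (0:ℝ) 1, 0 ≤ G t) →
      MonotoneOn G (Set.Ioc (0:ℝ) 1) →
      (∫⁻ t in Set.Ioc (0:ℝ) 1, ENNReal.ofReal (G t * g t) ∂volume) ≤ ENNReal.ofReal x₀ →
      ∀ t ∈ Set.Ioo (0:ℝ) 1, G t * (∫ s in Set.Ioc t 1, g s) ≤ x₀ := by
    intro G hG0 hGmono hbud t ht
    have hGt : 0 ≤ G t := hG0 t ⟨ht.1, ht.2.le⟩
    have step1 : (∫⁻ s in Set.Ioc t 1, ENNReal.ofReal (G t * g s))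
        ≤ ∫⁻ s in Set.Ioc (0:ℝ) 1, ENNReal.ofReal (G s * g s) := by
      refine le_trans ?_ (lintegral_mono_set (Set.Ioc_subset_Ioc ht.1.le le_rfl))
      refine lintegral_mono_ae ((ae_restrict_iff' measurableSet_Ioc).2 (ae_of_all _ ?_))
      intro s hs
      refine ENNReal.ofReal_le_ofReal (mul_le_mul_of_nonneg_right ?_
        (hg0 s (lt_trans ht.1 hs.1) hs.2))
      exact hGmono ⟨ht.1, ht.2.le⟩ ⟨lt_trans ht.1 hs.1, hs.2⟩ hs.1.le
    have step2 : (∫⁻ s in Set.Ioc t 1, ENNReal.ofReal (G t * g s))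
        = ENNReal.ofReal (G t) * ENNReal.ofReal (∫ s in Set.Ioc t 1, g s) := by
      have hcong : ∀ᵐ s ∂(volume.restrict (Set.Ioc t 1)),
          ENNReal.ofReal (G t * g s) = ENNReal.ofReal (G t) * ENNReal.ofReal (g s) :=
        ae_of_all _ (fun s => ENNReal.ofReal_mul hGt)
      rw [lintegral_congr_ae hcong, lintegral_const_mul' _ _ ENNReal.ofReal_ne_top,
        hlint t ⟨ht.1.le, ht.2⟩]
    have h3 : ENNReal.ofReal (G t * ∫ s in Set.Ioc t 1, g s) ≤ ENNReal.ofReal x₀ := by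
      rw [ENNReal.ofReal_mul hGt, ← step2]
      exact le_trans step1 hbud
    exact (ENNReal.ofReal_le_ofReal_iff hx₀.le).1 h3
  -- part (a): attainment of the supremum
  set H : ℝ → ℝ := fun r => F₁ (x₀ / ∫ s in Set.Ioc r 1, g s) - r with hHdef
  have hH0 : 0 ≤ H 0 := by
    simp only [hHdef, sub_zero]
    exact hF₁0 _
  have ha : ∃ rs ∈ Set.Ico (0:ℝ) 1, ∀ r ∈ Set.Ico (0:ℝ) 1, H r ≤ H rs := by
    set Ht : ℝ → ℝ := fun r => if r < 1 then H r else 0 with hHtdef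
    have hHtcont : ContinuousOn Ht (Set.Icc (0:ℝ) 1) := by
      intro r hr
      rcases lt_or_eq_of_le hr.2 with h1 | h1
      · have hHcont : ContinuousWithinAt H (Set.Icc (0:ℝ) 1) r := by
          refine ContinuousWithinAt.sub ?_ continuousWithinAt_id
          refine (hF₁cont.continuousAt).comp_continuousWithinAt ?_
          exact ContinuousWithinAt.div continuousWithinAt_const (hφcont r hr)
            (ne_of_gt (hφpos r ⟨hr.1, h1⟩))
        refine hHcont.congr_of_eventuallyEq ?_ (by simp only [hHtdef]; rw [if_pos h1])
        filter_upwards [eventually_nhdsWithin_of_eventually_nhds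
          (eventually_nhds_iff.2 ⟨Set.Iio 1, fun y hy => hy, isOpen_Iio, h1⟩)] with y hy
        simp only [hHtdef]
        rw [if_pos (show y < 1 from hy)]
      · -- r = 1
        subst h1
        rw [← continuousWithinAt_diff_self]
        have hIcc : Set.Icc (0:ℝ) 1 \ {1} = Set.Ico (0:ℝ) 1 := by
          ext y
          simp only [Set.mem_diff, Set.mem_Icc, Set.mem_singleton_iff, Set.mem_Ico]
          constructor
          · rintro ⟨⟨hy0, hy1⟩, hy2⟩
            exact ⟨hy0, lt_of_le_of_ne hy1 hy2⟩
          · rintro ⟨hy0, hy1⟩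
            exact ⟨⟨hy0, hy1.le⟩, ne_of_lt hy1⟩
        rw [hIcc]
        have hφlim : Tendsto (fun r => ∫ s in Set.Ioc r 1, g s)
            (𝓝[Set.Ico (0:ℝ) 1] 1) (𝓝 0) := by
          have h : Tendsto (fun r => ∫ s in Set.Ioc r 1, g s) (𝓝[Set.Icc (0:ℝ) 1] 1)
              (𝓝 (∫ s in Set.Ioc (1:ℝ) 1, g s)) := hφcont 1 ⟨zero_le_one, le_rfl⟩
          have h0 : (∫ s in Set.Ioc (1:ℝ) 1, g s) = 0 := by simp
          rw [h0] at h
          exact h.mono_left (nhdsWithin_mono _ Set.Ico_subset_Icc_self)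
        have hdiv : Tendsto (fun r => x₀ / ∫ s in Set.Ioc r 1, g s)
            (𝓝[Set.Ico (0:ℝ) 1] 1) atTop := by
          have hpos : Tendsto (fun r => ∫ s in Set.Ioc r 1, g s)
              (𝓝[Set.Ico (0:ℝ) 1] 1) (𝓝[>] 0) := by
            rw [tendsto_nhdsWithin_iff]
            exact ⟨hφlim, eventually_mem_nhdsWithin.mono (fun r hr => hφpos r hr)⟩
          have hinv := tendsto_inv_nhdsGT_zero.comp hpos
          have hmul := hinv.const_mul_atTop hx₀
          simpa [div_eq_mul_inv, Function.comp] using hmul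
        have hFlim := hF₁top.comp hdiv
        have hid : Tendsto (fun r : ℝ => r) (𝓝[Set.Ico (0:ℝ) 1] 1) (𝓝 1) :=
          tendsto_id.mono_left nhdsWithin_le_nhds
        have hHlim : Tendsto H (𝓝[Set.Ico (0:ℝ) 1] 1) (𝓝 0) := by
          have hsub := hFlim.sub hid
          have h11 : (1:ℝ) - 1 = 0 := by norm_num
          rw [h11] at hsub
          exact hsub
        have hHt1 : Ht 1 = 0 := by simp [hHtdef]
        show Tendsto Ht (𝓝[Set.Ico (0:ℝ) 1] 1) (𝓝 (Ht 1))
        rw [hHt1]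
        refine hHlim.congr' ?_
        filter_upwards [eventually_mem_nhdsWithin] with y hy
        simp only [hHtdef]
        rw [if_pos hy.2]
    obtain ⟨r₀, hr₀mem, hr₀max⟩ :=
      isCompact_Icc.exists_isMaxOn (Set.nonempty_Icc.2 zero_le_one) hHtcont
    by_cases hr₀1 : r₀ < 1
    · refine ⟨r₀, ⟨hr₀mem.1, hr₀1⟩, fun r hr => ?_⟩
      have h1 := isMaxOn_iff.1 hr₀max r (Set.Ico_subset_Icc_self hr)
      simp only [hHtdef] at h1
      rwa [if_pos hr.2, if_pos hr₀1] at h1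
    · push_neg at hr₀1
      have hr₀ : r₀ = 1 := le_antisymm hr₀mem.2 hr₀1
      refine ⟨0, ⟨le_rfl, one_pos⟩, fun r hr => ?_⟩
      have h1 := isMaxOn_iff.1 hr₀max r (Set.Ico_subset_Icc_self hr)
      rw [hr₀] at h1
      simp only [hHtdef] at h1
      rw [if_pos hr.2, if_neg (lt_irrefl (1:ℝ))] at h1
      exact le_trans h1 hH0
  obtain ⟨rs, hrsmem, hrsmax⟩ := ha
  have hφrs : 0 < ∫ s in Set.Ioc rs 1, g s := hφpos rs hrsmem
  refine ⟨rs, hrsmem, fun r hr => hrsmax r hr, x₀ / ∫ s in Set.Ioc rs 1, g s, rfl, ?_, ?_⟩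
  · -- feasibility
    have hκ : 0 ≤ x₀ / ∫ s in Set.Ioc rs 1, g s := div_nonneg hx₀.le hφrs.le
    have e1 : (∫⁻ t in Set.Ioc (0:ℝ) 1,
        ENNReal.ofReal ((if rs < t then x₀ / ∫ s in Set.Ioc rs 1, g s else 0) * g t))
        = ∫⁻ t in Set.Ioc rs 1,
            ENNReal.ofReal ((x₀ / ∫ s in Set.Ioc rs 1, g s) * g t) := by
      rw [← lintegral_indicator measurableSet_Ioc, ← lintegral_indicator measurableSet_Ioc]
      congr 1
      ext t
      by_cases h1 : t ∈ Set.Ioc rs 1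
      · have h2 : t ∈ Set.Ioc (0:ℝ) 1 := ⟨lt_of_le_of_lt hrsmem.1 h1.1, h1.2⟩
        rw [Set.indicator_of_mem h2, Set.indicator_of_mem h1, if_pos h1.1]
      · by_cases h2 : t ∈ Set.Ioc (0:ℝ) 1
        · have h3 : ¬ rs < t := fun hc => h1 ⟨hc, h2.2⟩
          rw [Set.indicator_of_mem h2, Set.indicator_of_notMem h1, if_neg h3, zero_mul,
            ENNReal.ofReal_zero]
        · rw [Set.indicator_of_notMem h1, Set.indicator_of_notMem h2]
    have e2 : (∫⁻ t in Set.Ioc rs 1,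
        ENNReal.ofReal ((x₀ / ∫ s in Set.Ioc rs 1, g s) * g t))
        = ENNReal.ofReal ((x₀ / ∫ s in Set.Ioc rs 1, g s) * ∫ s in Set.Ioc rs 1, g s) := by
      have hcong : ∀ᵐ t ∂(volume.restrict (Set.Ioc rs 1)),
          ENNReal.ofReal ((x₀ / ∫ s in Set.Ioc rs 1, g s) * g t)
            = ENNReal.ofReal (x₀ / ∫ s in Set.Ioc rs 1, g s) * ENNReal.ofReal (g t) :=
        ae_of_all _ (fun t => ENNReal.ofReal_mul hκ)
      rw [lintegral_congr_ae hcong, lintegral_const_mul' _ _ ENNReal.ofReal_ne_top,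
        hlint rs hrsmem, ← ENNReal.ofReal_mul hκ]
    rw [e1, e2, div_mul_cancel₀ x₀ (ne_of_gt hφrs)]
  · -- optimality
    intro G hG0 hGmono _ hbud
    haveI : Nonempty (Set.Ioc (0:ℝ) 1) := ⟨⟨1, by norm_num⟩⟩
    have hbdd : BddAbove (Set.range fun t : Set.Ioc (0:ℝ) 1 =>
        F₁ (if rs < (t:ℝ) then x₀ / ∫ s in Set.Ioc rs 1, g s else 0) - (t:ℝ)) := by
      refine ⟨1, ?_⟩
      rintro y ⟨t, rfl⟩
      have h1 := hF₁1 (if rs < (t:ℝ) then x₀ / ∫ s in Set.Ioc rs 1, g s else 0)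
      have h2 := t.2.1
      simp only
      linarith
    have hHrs_le : H rs ≤ ⨆ t : Set.Ioc (0:ℝ) 1,
        (F₁ (if rs < (t:ℝ) then x₀ / ∫ s in Set.Ioc rs 1, g s else 0) - (t:ℝ)) := by
      refine le_of_forall_lt fun c hc => ?_
      have hHrs : H rs = F₁ (x₀ / ∫ s in Set.Ioc rs 1, g s) - rs := by simp only [hHdef]
      rw [hHrs] at hc
      have hδ0 : 0 < F₁ (x₀ / ∫ s in Set.Ioc rs 1, g s) - rs - c := by linarith
      set δ : ℝ := F₁ (x₀ / ∫ s in Set.Ioc rs 1, g s) - rs - c with hδ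
      have htmem : min (rs + δ / 2) 1 ∈ Set.Ioc (0:ℝ) 1 :=
        ⟨lt_min (by linarith [hrsmem.1]) one_pos, min_le_right _ _⟩
      have hrst : rs < min (rs + δ / 2) 1 := lt_min (by linarith) hrsmem.2
      have hle : F₁ (if rs < min (rs + δ / 2) 1 then x₀ / ∫ s in Set.Ioc rs 1, g s else 0)
          - min (rs + δ / 2) 1 ≤ ⨆ t : Set.Ioc (0:ℝ) 1,
          (F₁ (if rs < (t:ℝ) then x₀ / ∫ s in Set.Ioc rs 1, g s else 0) - (t:ℝ)) :=
        le_ciSup hbdd (⟨min (rs + δ / 2) 1, htmem⟩ : Set.Ioc (0:ℝ) 1)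
      rw [if_pos hrst] at hle
      have ht2 : min (rs + δ / 2) 1 ≤ rs + δ / 2 := min_le_left _ _
      calc c < F₁ (x₀ / ∫ s in Set.Ioc rs 1, g s) - min (rs + δ / 2) 1 := by linarith
        _ ≤ _ := hle
    refine ciSup_le ?_
    rintro ⟨t, ht⟩
    rcases lt_or_eq_of_le ht.2 with ht1 | ht1
    · -- t < 1
      have hb := hkey G hG0 hGmono hbud t ⟨ht.1, ht1⟩
      have hφt : 0 < ∫ s in Set.Ioc t 1, g s := hφpos t ⟨ht.1.le, ht1⟩
      have hGle : G t ≤ x₀ / ∫ s in Set.Ioc t 1, g s := (le_div_iff₀ hφt).2 hb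
      have h1 : F₁ (G t) - t ≤ H t := sub_le_sub_right (hF₁mono hGle) t
      exact le_trans (le_trans h1 (hrsmax t ⟨ht.1.le, ht1⟩)) hHrs_le
    · -- t = 1
      have h1 : F₁ (G t) - t ≤ 0 := by rw [ht1]; linarith [hF₁1 (G 1)]
      have h2 : 0 ≤ H rs := le_trans hH0 (hrsmax 0 ⟨le_rfl, one_pos⟩)
      exact le_trans h1 (le_trans h2 hHrs_le)
end

section
/- Let X be a nonnegative random variable with essential supremum M < ∞ and survival function S_X = 1 − F_X, and let g be a distortion function. Then for any 0 ≤ η ≤ q ≤ q' ≤ M, 0 ≤ E^g[R_{η,q}(X)] − E^g[R_{η,q'}(X)] ≤ q' − q; that is, the map q ↦ E^g[R_{η,q}(X)] is decreasing and 1-Lipschitz continuous on [η, M]. -/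
open MeasureTheory

/-- A distortion function: increasing `g : [0,1] → [0,1]` with `g 0 = 0` and `g 1 = 1`. -/
def IsDistortion (g : ℝ → ℝ) : Prop :=
  MonotoneOn g (Set.Icc 0 1) ∧ (∀ x ∈ Set.Icc (0:ℝ) 1, g x ∈ Set.Icc (0:ℝ) 1) ∧
    g 0 = 0 ∧ g 1 = 1

/-- The cdf of a real random variable `Z` under `P`. -/
noncomputable def cdfOf {Ω : Type*} [MeasurableSpace Ω] (P : Measure Ω) (Z : Ω → ℝ) :
    ℝ → ℝ := fun z => (P {ω | Z ω ≤ z}).toReal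

/-- Distorted expectation `E^g[Z] = ∫_0^∞ g(1 − F_Z(z)) dz` of a nonnegative random
variable `Z`. -/
noncomputable def distExp {Ω : Type*} [MeasurableSpace Ω] (g : ℝ → ℝ) (P : Measure Ω)
    (Z : Ω → ℝ) : ℝ := ∫ z in Set.Ioi (0 : ℝ), g (1 - cdfOf P Z z)

/-- The retained loss function `R_{η,q}`: `x` on `[0,η]`, `η` on `(η,q]`, `η + x − q` beyond. -/
noncomputable def Rfun (η q : ℝ) : ℝ → ℝ := fun x =>
  if x ≤ η then x else if x ≤ q then η else η + x - q

section Aux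

open Set

variable {Ω : Type*} [MeasurableSpace Ω]

/-- The survival-distorted integrand for the retained loss. -/
noncomputable def phiR (g : ℝ → ℝ) (P : Measure Ω) (X : Ω → ℝ) (η r z : ℝ) : ℝ :=
  g (1 - (P {ω | Rfun η r (X ω) ≤ z}).toReal)

lemma distExp_Rfun_eq (g : ℝ → ℝ) (P : Measure Ω) (X : Ω → ℝ) (η r : ℝ) :
    distExp g P (fun ω => Rfun η r (X ω)) = ∫ z in Set.Ioi (0:ℝ), phiR g P X η r z := rfl

lemma Rfun_nonneg {η r x : ℝ} (hη : 0 ≤ η) (hr : η ≤ r) (hx : 0 ≤ x) : 0 ≤ Rfun η r x := by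
  simp only [Rfun]; split_ifs <;> linarith

lemma Rfun_le_self {η r x : ℝ} (hr : η ≤ r) (hx : 0 ≤ x) : Rfun η r x ≤ x := by
  simp only [Rfun]; split_ifs <;> linarith

lemma Rfun_anti {η q q' x : ℝ} (hqq' : q ≤ q') : Rfun η q' x ≤ Rfun η q x := by
  simp only [Rfun]; split_ifs <;> linarith

lemma Rfun_lip {η q q' x : ℝ} (hqq' : q ≤ q') : Rfun η q x ≤ Rfun η q' x + (q' - q) := by
  simp only [Rfun]; split_ifs <;> linarith

end Aux

/-- **Lemma 3.1, first part.** For a nonnegative random variable `X` essentially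
bounded by `M < ∞` and a distortion function `g`, for any `0 ≤ η ≤ q ≤ q' ≤ M`,
`0 ≤ E^g[R_{η,q}(X)] − E^g[R_{η,q'}(X)] ≤ q' − q`: the map `q ↦ E^g[R_{η,q}(X)]` is decreasing
and 1-Lipschitz on `[η, M]`. -/
theorem distExp_layer_decreasing_lipschitz {Ω : Type*} [MeasurableSpace Ω]
    (P : Measure Ω) [IsProbabilityMeasure P]
    (X : Ω → ℝ) (hX : Measurable X) (hXnn : ∀ ω, 0 ≤ X ω)
    (M : ℝ) (hMbound : ∀ᵐ ω ∂P, X ω ≤ M)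
    (hMleast : ∀ M' : ℝ, (∀ᵐ ω ∂P, X ω ≤ M') → M ≤ M')
    (g : ℝ → ℝ) (hg : IsDistortion g)
    (η q q' : ℝ) (hη : 0 ≤ η) (hq : η ≤ q) (hqq' : q ≤ q') (hq'M : q' ≤ M) :
    0 ≤ distExp g P (fun ω => Rfun η q (X ω)) - distExp g P (fun ω => Rfun η q' (X ω)) ∧
      distExp g P (fun ω => Rfun η q (X ω)) - distExp g P (fun ω => Rfun η q' (X ω))
        ≤ q' - q := by
  obtain ⟨hgmono, hgmem, hg0, hg1⟩ := hg
  have hM0 : (0:ℝ) ≤ M := hη.trans (hq.trans (hqq'.trans hq'M))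
  set δ := q' - q with hδdef
  have hδ0 : 0 ≤ δ := by rw [hδdef]; linarith
  have hδM : δ ≤ M := by rw [hδdef]; linarith
  set F : ℝ → ℝ → ℝ := fun r z => (P {ω | Rfun η r (X ω) ≤ z}).toReal with hFdef
  -- basic cdf facts
  have hF01 : ∀ r z, F r z ∈ Set.Icc (0:ℝ) 1 := by
    intro r z
    refine ⟨ENNReal.toReal_nonneg, ?_⟩
    have := ENNReal.toReal_mono (by simp) (prob_le_one (μ := P) (s := {ω | Rfun η r (X ω) ≤ z}))
    simpa using this
  have hFmono : ∀ r, Monotone (F r) := by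
    intro r z1 z2 h
    exact ENNReal.toReal_mono (measure_ne_top P _)
      (measure_mono fun ω hω => le_trans hω h)
  have hF1 : ∀ r, η ≤ r → ∀ z, M ≤ z → F r z = 1 := by
    intro r hr z hz
    have h1 : P {ω | Rfun η r (X ω) ≤ z} = 1 := by
      refine le_antisymm prob_le_one ?_
      have hsub : (Set.univ : Set Ω) ≤ᵐ[P] {ω | Rfun η r (X ω) ≤ z} := by
        filter_upwards [hMbound] with ω hω _
        exact le_trans (Rfun_le_self hr (hXnn ω)) (le_trans hω hz)
      calc (1:ENNReal) = P Set.univ := measure_univ.symm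
        _ ≤ _ := measure_mono_ae hsub
    simp [hFdef, h1]
  have hF0 : ∀ r, η ≤ r → ∀ z, z < 0 → F r z = 0 := by
    intro r hr z hz
    have h0 : {ω | Rfun η r (X ω) ≤ z} = ∅ := by
      ext ω
      simp only [Set.mem_setOf_eq, Set.mem_empty_iff_false, iff_false, not_le]
      exact lt_of_lt_of_le hz (Rfun_nonneg hη hr (hXnn ω))
    simp [hFdef, h0]
  have hFcmp : ∀ z, F q z ≤ F q' z := fun z =>
    ENNReal.toReal_mono (measure_ne_top P _)
      (measure_mono fun ω hω => le_trans (Rfun_anti hqq') hω)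
  have hFshift : ∀ z, F q' (z - δ) ≤ F q z := fun z =>
    ENNReal.toReal_mono (measure_ne_top P _)
      (measure_mono fun ω hω => by
        simp only [Set.mem_setOf_eq] at hω ⊢
        have := Rfun_lip (η := η) (q := q) (q' := q') (x := X ω) hqq'
        simp only [← hδdef] at this
        linarith)
  -- the integrand
  set φ : ℝ → ℝ → ℝ := fun r z => g (1 - F r z) with hφdef
  have hmem1 : ∀ r z, (1 - F r z) ∈ Set.Icc (0:ℝ) 1 :=
    fun r z => ⟨by linarith [(hF01 r z).2], by linarith [(hF01 r z).1]⟩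
  have hφmem : ∀ r z, φ r z ∈ Set.Icc (0:ℝ) 1 := fun r z => hgmem _ (hmem1 r z)
  have hφanti : ∀ r, Antitone (φ r) := by
    intro r z1 z2 h
    exact hgmono (hmem1 r z2) (hmem1 r z1) (by linarith [hFmono r h])
  have hφ_zero : ∀ r, η ≤ r → ∀ z, M ≤ z → φ r z = 0 := by
    intro r hr z hz
    simp [hφdef, hF1 r hr z hz, hg0]
  have hφ_one : ∀ r, η ≤ r → ∀ z, z < 0 → φ r z = 1 := by
    intro r hr z hz
    simp [hφdef, hF0 r hr z hz, hg1]
  -- integrability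
  have hφint : ∀ r (s : Set ℝ), volume s ≠ ⊤ → IntegrableOn (φ r) s := by
    intro r s hs
    refine Integrable.mono' (g := fun _ => (1:ℝ))
      (integrableOn_const hs)
      ((hφanti r).measurable.aestronglyMeasurable) ?_
    filter_upwards with z
    rw [Real.norm_eq_abs, abs_of_nonneg (hφmem r z).1]
    exact (hφmem r z).2
  have hφsint : ∀ (s : Set ℝ), volume s ≠ ⊤ →
      IntegrableOn (fun z => φ q' (z - δ)) s := by
    intro s hs
    have hanti : Antitone (fun z => φ q' (z - δ)) :=
      fun z1 z2 h => hφanti q' (by linarith)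
    refine Integrable.mono' (g := fun _ => (1:ℝ))
      (integrableOn_const hs)
      (hanti.measurable.aestronglyMeasurable) ?_
    filter_upwards with z
    rw [Real.norm_eq_abs, abs_of_nonneg (hφmem q' _).1]
    exact (hφmem q' _).2
  have hIocM : volume (Set.Ioc (0:ℝ) M) ≠ ⊤ := measure_Ioc_lt_top.ne
  -- reduce to ∫ over Ioc 0 M
  have hred : ∀ r, η ≤ r →
      ∫ z in Set.Ioi (0:ℝ), φ r z = ∫ z in Set.Ioc (0:ℝ) M, φ r z := by
    intro r hr
    have heq : Set.EqOn (φ r) ((Set.Ioc (0:ℝ) M).indicator (φ r)) (Set.Ioi 0) := by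
      intro z hz
      by_cases hzM : z ≤ M
      · exact (Set.indicator_of_mem (Set.mem_Ioc.mpr ⟨hz, hzM⟩) _).symm
      · rw [Set.indicator_of_notMem (fun hc => hzM hc.2), hφ_zero r hr z (not_le.mp hzM).le]
    rw [setIntegral_congr_fun measurableSet_Ioi heq,
      setIntegral_indicator measurableSet_Ioc,
      Set.inter_eq_right.mpr Set.Ioc_subset_Ioi_self]
  have e1 : distExp g P (fun ω => Rfun η q (X ω)) = ∫ z in Set.Ioc (0:ℝ) M, φ q z :=
    (distExp_Rfun_eq g P X η q).trans (hred q hq)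
  have e2 : distExp g P (fun ω => Rfun η q' (X ω)) = ∫ z in Set.Ioc (0:ℝ) M, φ q' z :=
    (distExp_Rfun_eq g P X η q').trans (hred q' (hq.trans hqq'))
  -- first inequality
  have h1 : ∫ z in Set.Ioc (0:ℝ) M, φ q' z ≤ ∫ z in Set.Ioc (0:ℝ) M, φ q z := by
    refine setIntegral_mono (hφint q' _ hIocM) (hφint q _ hIocM) fun z => ?_
    exact hgmono (hmem1 q' z) (hmem1 q z) (by linarith [hFcmp z])
  -- second inequality
  have step1 : ∫ z in Set.Ioc (0:ℝ) M, φ q z ≤ ∫ z in Set.Ioc (0:ℝ) M, φ q' (z - δ) := by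
    refine setIntegral_mono (hφint q _ hIocM) (hφsint _ hIocM) fun z => ?_
    exact hgmono (hmem1 q z) (hmem1 q' (z - δ)) (by linarith [hFshift z])
  have step2 : ∫ z in Set.Ioc (0:ℝ) M, φ q' (z - δ)
      = ∫ z in Set.Ioc (-δ) (M - δ), φ q' z := by
    rw [← integral_indicator measurableSet_Ioc, ← integral_indicator measurableSet_Ioc]
    have hind : ∀ z, (Set.Ioc (0:ℝ) M).indicator (fun z => φ q' (z - δ)) z
        = (Set.Ioc (-δ) (M - δ)).indicator (φ q') (z - δ) := by
      intro z
      by_cases h : z ∈ Set.Ioc (0:ℝ) M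
      · rw [Set.indicator_of_mem h, Set.indicator_of_mem (Set.mem_Ioc.mpr ⟨by linarith [Set.mem_Ioc.mp h |>.1], by linarith [Set.mem_Ioc.mp h |>.2]⟩)]
      · rw [Set.indicator_of_notMem h, Set.indicator_of_notMem
          (fun hc => h (Set.mem_Ioc.mpr ⟨by linarith [Set.mem_Ioc.mp hc |>.1], by linarith [Set.mem_Ioc.mp hc |>.2]⟩))]
    simp_rw [hind]
    exact integral_sub_right_eq_self ((Set.Ioc (-δ) (M - δ)).indicator (φ q')) δ
  have hdisj : Disjoint (Set.Ioc (-δ) (0:ℝ)) (Set.Ioc (0:ℝ) (M - δ)) :=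
    Set.Ioc_disjoint_Ioc.mpr (le_trans (min_le_left _ _) (le_max_right _ _))
  have split : ∫ z in Set.Ioc (-δ) (M - δ), φ q' z
      = (∫ z in Set.Ioc (-δ) (0:ℝ), φ q' z) + ∫ z in Set.Ioc (0:ℝ) (M - δ), φ q' z := by
    rw [← setIntegral_union hdisj measurableSet_Ioc
        (hφint q' _ measure_Ioc_lt_top.ne) (hφint q' _ measure_Ioc_lt_top.ne),
      Set.Ioc_union_Ioc_eq_Ioc (by linarith) (by linarith)]
  have left_eq : ∫ z in Set.Ioc (-δ) (0:ℝ), φ q' z = δ := by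
    rw [integral_Ioc_eq_integral_Ioo,
      setIntegral_congr_fun measurableSet_Ioo
        (fun z hz => hφ_one q' (hq.trans hqq') z hz.2)]
    simp [Real.volume_Ioo, ENNReal.toReal_ofReal hδ0, hδ0]
  have right_le : ∫ z in Set.Ioc (0:ℝ) (M - δ), φ q' z ≤ ∫ z in Set.Ioc (0:ℝ) M, φ q' z := by
    refine setIntegral_mono_set (hφint q' _ hIocM) ?_ ?_
    · filter_upwards with z using (hφmem q' z).1
    · exact (Set.Ioc_subset_Ioc_right (by linarith)).eventuallyLE
  constructor
  · rw [e1, e2]; linarith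
  · rw [e1, e2]; linarith [step1, step2, split, left_eq, right_le]
end

section
/- Let R : [0,∞) → [0,∞) satisfy R(0) = 0 with both R and x ↦ x − R(x) increasing (i.e., 0 ≤ R(x') − R(x) ≤ x' − x for all 0 ≤ x ≤ x'). If R(q) ≤ η for some 0 ≤ η ≤ q, then R(x) ≤ R_{η,q}(x) for every x ≥ 0. -/
/-- A retained loss function: `R(0) = 0`, with both `R` and `x ↦ x − R(x)` increasing on
`[0,∞)` (so `0 ≤ R(x') − R(x) ≤ x' − x` for `0 ≤ x ≤ x'`), mapping `[0,∞)` to `[0,∞)`. -/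
def IsRetention (R : ℝ → ℝ) : Prop :=
  R 0 = 0 ∧ MonotoneOn R (Set.Ici 0) ∧ MonotoneOn (fun x => x - R x) (Set.Ici 0)

/-- **Lemma 3.1, second part.** If `R ∈ 𝓡` satisfies `R(q) ≤ η` for some
`0 ≤ η ≤ q`, then `R(x) ≤ R_{η,q}(x)` for every `x ≥ 0`. -/
theorem retention_le_layer (R : ℝ → ℝ) (hR : IsRetention R)
    (η q : ℝ) (hη : 0 ≤ η) (hηq : η ≤ q) (hRq : R q ≤ η) :
    ∀ x : ℝ, 0 ≤ x → R x ≤ Rfun η q x := by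
  obtain ⟨h0, hmono, hcomono⟩ := hR
  intro x hx
  have hq0 : (0:ℝ) ≤ q := hη.trans hηq
  unfold Rfun
  split_ifs with h1 h2
  · have := hcomono (Set.self_mem_Ici) hx hx
    simp [h0] at this
    linarith
  · exact le_trans (hmono (Set.mem_Ici.mpr hx) (Set.mem_Ici.mpr hq0) h2) hRq
  · have := hcomono (Set.mem_Ici.mpr hq0) hx (le_of_lt (lt_of_not_ge h2))
    simp only at this
    linarith
end

section
/- Let X be a nonnegative random variable, g a distortion function, η ≥ 0, and 0 ≤ π₀ ≤ E^g[R_η(X)], where R_t(x) = min{x, t}. Then there exists t* ∈ [0, η] such that E^g[R_{t*}(X)] = π₀ and ℙ(R_{t*}(X) ≤ η) = 1. Consequently, R_{t*} is an optimal solution of the problem of maximizing ℙ(R(X) ≤ η) over all R ∈ 𝓡 subject to E^g[R(X)] = π₀, and the optimal value is 1. -/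
open MeasureTheory

/-- **Proposition 3.1.** If `0 ≤ π₀ ≤ E^g[R_η(X)]` with `R_t(x) = min{x,t}`,
then there is `t* ∈ [0,η]` with `E^g[R_{t*}(X)] = π₀` and `ℙ(R_{t*}(X) ≤ η) = 1`; hence
`R_{t*}` is optimal for maximizing `ℙ(R(X) ≤ η)` over `R ∈ 𝓡` with `E^g[R(X)] = π₀`, and the
optimal value is `1`. -/
theorem stop_loss_optimal_small_premium {Ω : Type*} [MeasurableSpace Ω]
    (P : Measure Ω) [IsProbabilityMeasure P]
    (X : Ω → ℝ) (hX : Measurable X) (hXnn : ∀ ω, 0 ≤ X ω)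
    (g : ℝ → ℝ) (hg : IsDistortion g)
    (η : ℝ) (hη : 0 ≤ η)
    (π₀ : ℝ) (hπ₀nn : 0 ≤ π₀)
    (hπ₀le : π₀ ≤ distExp g P (fun ω => min (X ω) η)) :
    ∃ ts ∈ Set.Icc (0 : ℝ) η,
      distExp g P (fun ω => min (X ω) ts) = π₀ ∧
      P {ω | min (X ω) ts ≤ η} = 1 ∧
      ∀ R : ℝ → ℝ, IsRetention R → distExp g P (fun ω => R (X ω)) = π₀ →
        (P {ω | R (X ω) ≤ η}).toReal ≤ (P {ω | min (X ω) ts ≤ η}).toReal := by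
  obtain ⟨hgmono, hgmem, hg0, hg1⟩ := hg
  set h : ℝ → ℝ := fun z => g (1 - cdfOf P X z) with hh
  have hFmem : ∀ z : ℝ, cdfOf P X z ∈ Set.Icc (0:ℝ) 1 := by
    intro z
    refine ⟨ENNReal.toReal_nonneg, ?_⟩
    have h1 := prob_le_one (μ := P) (s := {ω | X ω ≤ z})
    simpa [cdfOf] using ENNReal.toReal_mono ENNReal.one_ne_top h1
  have hmem : ∀ z : ℝ, (1 - cdfOf P X z) ∈ Set.Icc (0:ℝ) 1 := by
    intro z
    have := hFmem z
    constructor <;> [linarith [this.2]; linarith [this.1]]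
  have hanti : Antitone h := by
    intro a b hab
    apply hgmono (hmem b) (hmem a)
    have hFab : cdfOf P X a ≤ cdfOf P X b := by
      apply ENNReal.toReal_mono (measure_ne_top P _)
      exact measure_mono fun ω hω => le_trans hω hab
    linarith
  have key : ∀ t : ℝ, 0 ≤ t →
      distExp g P (fun ω => min (X ω) t) = ∫ z in (0:ℝ)..t, h z := by
    intro t ht
    have hEq : Set.EqOn (fun z => g (1 - cdfOf P (fun ω => min (X ω) t) z))
        (Set.indicator (Set.Ioo 0 t) h) (Set.Ioi (0:ℝ)) := by
      intro z hz
      by_cases hzt : z < t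
      · rw [Set.indicator_of_mem (Set.mem_Ioo.mpr ⟨hz, hzt⟩)]
        have hset : {ω | min (X ω) t ≤ z} = {ω | X ω ≤ z} := by
          ext ω
          simp only [Set.mem_setOf_eq, min_le_iff]
          constructor
          · rintro (h' | h')
            · exact h'
            · linarith
          · exact Or.inl
        show g (1 - cdfOf P (fun ω => min (X ω) t) z) = g (1 - cdfOf P X z)
        simp only [cdfOf]
        rw [hset]
      · rw [Set.indicator_of_notMem (fun hm => hzt hm.2)]
        have hset : {ω | min (X ω) t ≤ z} = Set.univ := by
          ext ω
          simp only [Set.mem_setOf_eq, Set.mem_univ, iff_true, min_le_iff]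
          right; linarith
        show g (1 - cdfOf P (fun ω => min (X ω) t) z) = 0
        simp only [cdfOf]
        rw [hset, measure_univ]
        simpa using hg0
    rw [distExp, setIntegral_congr_fun measurableSet_Ioi hEq,
      setIntegral_indicator measurableSet_Ioo,
      Set.inter_eq_self_of_subset_right Set.Ioo_subset_Ioi_self,
      intervalIntegral.integral_of_le ht, integral_Ioc_eq_integral_Ioo]
  set φ : ℝ → ℝ := fun t => ∫ z in (0:ℝ)..t, h z with hφ
  have hcont : Continuous φ :=
    intervalIntegral.continuous_primitive (fun a b => hanti.intervalIntegrable) 0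
  have hφ0 : φ 0 = 0 := intervalIntegral.integral_same
  have hπ₀le' : π₀ ≤ φ η := by rwa [key η hη] at hπ₀le
  have hmemIcc : π₀ ∈ Set.Icc (φ 0) (φ η) := by rw [hφ0]; exact ⟨hπ₀nn, hπ₀le'⟩
  obtain ⟨ts, hts, hφts⟩ := intermediate_value_Icc hη hcont.continuousOn hmemIcc
  refine ⟨ts, hts, ?_, ?_, ?_⟩
  · rw [key ts hts.1]; exact hφts
  · have : {ω | min (X ω) ts ≤ η} = Set.univ := by
      ext ω
      simp only [Set.mem_setOf_eq, Set.mem_univ, iff_true]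
      exact le_trans (min_le_right _ _) hts.2
    rw [this, measure_univ]
  · intro R _ _
    have h1 : {ω | min (X ω) ts ≤ η} = Set.univ := by
      ext ω
      simp only [Set.mem_setOf_eq, Set.mem_univ, iff_true]
      exact le_trans (min_le_right _ _) hts.2
    rw [h1, measure_univ]
    simpa using ENNReal.toReal_mono ENNReal.one_ne_top (prob_le_one (μ := P))
end

section
/- Let X be a nonnegative random variable with essential supremum M < ∞, g a distortion function, η ∈ [0, M], and π₀ a real number with E^g[R_η(X)] < π₀ ≤ E^g[X], where R_η(x) = min{x, η}. Then q* := max{ q ∈ [η, M) : E^g[R_{η,q}(X)] = π₀ } is well defined (the set is nonempty and its supremum is attained and lies in [η, M)), and R_{η,q*} is an optimal solution of the problem of maximizing ℙ(R(X) ≤ η) over all R ∈ 𝓡 subject to E^g[R(X)] = π₀; the optimal value equals F_X(q*) = ℙ(R_{η,q*}(X) ≤ η). -/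
open MeasureTheory

open scoped ENNReal
open Set
set_option linter.unusedSectionVars false
set_option linter.unusedVariables false
set_option maxHeartbeats 1000000

namespace LayerAux

variable {Ω : Type*} [MeasurableSpace Ω] (P : Measure Ω) [IsProbabilityMeasure P]
variable (g : ℝ → ℝ) (Y : Ω → ℝ)

lemma cdf_nonneg (z : ℝ) : 0 ≤ cdfOf P Y z := ENNReal.toReal_nonneg

lemma cdf_le_one (z : ℝ) : cdfOf P Y z ≤ 1 := by
  have h := ENNReal.toReal_mono (by simp) (prob_le_one (μ := P) (s := {ω | Y ω ≤ z}))
  simpa [cdfOf] using h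

lemma cdf_mono : Monotone (cdfOf P Y) := by
  intro a b hab
  exact ENNReal.toReal_mono (measure_ne_top P _)
    (measure_mono (fun ω (h : Y ω ≤ a) => h.trans hab))

lemma cdf_eq_one {c : ℝ} (hc : ∀ᵐ ω ∂P, Y ω ≤ c) {z : ℝ} (hz : c ≤ z) :
    cdfOf P Y z = 1 := by
  have h1 : P {ω | Y ω ≤ z} = 1 := by
    refine le_antisymm prob_le_one ?_
    have hsub : (Set.univ : Set Ω) ⊆ {ω | Y ω ≤ z} ∪ {ω | ¬ Y ω ≤ c} := by
      intro ω _
      by_cases h : Y ω ≤ c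
      · exact Or.inl (h.trans hz)
      · exact Or.inr h
    have h0 : P {ω | ¬ Y ω ≤ c} = 0 := hc
    calc (1 : ℝ≥0∞) = P Set.univ := (measure_univ).symm
      _ ≤ P ({ω | Y ω ≤ z} ∪ {ω | ¬ Y ω ≤ c}) := measure_mono hsub
      _ ≤ P {ω | Y ω ≤ z} + P {ω | ¬ Y ω ≤ c} := measure_union_le _ _
      _ = P {ω | Y ω ≤ z} := by rw [h0, add_zero]
  simp [cdfOf, h1]

/-- the integrand of the distorted expectation -/
noncomputable def hker : ℝ → ℝ := fun z => g (1 - cdfOf P Y z)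

lemma hker_mem (hg : IsDistortion g) (z : ℝ) : hker P g Y z ∈ Set.Icc (0:ℝ) 1 :=
  hg.2.1 _ ⟨by linarith [cdf_le_one P Y z], by linarith [cdf_nonneg P Y z]⟩

lemma hker_anti (hg : IsDistortion g) : Antitone (hker P g Y) := by
  intro a b hab
  refine hg.1 ⟨by linarith [cdf_le_one P Y b], by linarith [cdf_nonneg P Y b]⟩
    ⟨by linarith [cdf_le_one P Y a], by linarith [cdf_nonneg P Y a]⟩ ?_
  have := cdf_mono P Y hab
  linarith

lemma hker_eq_zero (hg : IsDistortion g) {c : ℝ} (hc : ∀ᵐ ω ∂P, Y ω ≤ c) {z : ℝ}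
    (hz : c ≤ z) : hker P g Y z = 0 := by
  rw [hker, cdf_eq_one P Y hc hz, sub_self, hg.2.2.1]

lemma hker_integrableOn (hg : IsDistortion g) {c : ℝ} (hc : ∀ᵐ ω ∂P, Y ω ≤ c)
    {s : Set ℝ} (hs : s ⊆ Set.Ioi 0) : IntegrableOn (hker P g Y) s := by
  have hmono : IntegrableOn (hker P g Y) (Set.Ioi 0) := by
    refine Integrable.mono' (g := (Set.Ioc (0:ℝ) c).indicator fun _ => (1:ℝ)) ?_ ?_ ?_
    · exact (MeasureTheory.integrable_indicator_iff measurableSet_Ioc).2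
        (integrableOn_const measure_Ioc_lt_top.ne) |>.restrict
    · exact ((hker_anti P g Y hg).measurable).aestronglyMeasurable
    · refine (ae_restrict_iff' measurableSet_Ioi).2 (Filter.Eventually.of_forall ?_)
      intro z hz
      rw [Real.norm_of_nonneg (hker_mem P g Y hg z).1]
      by_cases h : z ≤ c
      · have : z ∈ Set.Ioc (0:ℝ) c := ⟨hz, h⟩
        rw [Set.indicator_of_mem this]
        exact (hker_mem P g Y hg z).2
      · rw [hker_eq_zero P g Y hg hc (le_of_not_ge h)]
        exact Set.indicator_nonneg (fun _ _ => zero_le_one) z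
  exact hmono.mono_set hs

end LayerAux

namespace LayerAux

variable {Ω : Type*} [MeasurableSpace Ω] (P : Measure Ω) [IsProbabilityMeasure P]
variable (g : ℝ → ℝ) (Y : Ω → ℝ)

lemma distExp_eq_hker : distExp g P Y = ∫ z in Set.Ioi (0:ℝ), hker P g Y z := rfl

lemma distExp_split (hg : IsDistortion g) {c : ℝ} (hc : ∀ᵐ ω ∂P, Y ω ≤ c) {a : ℝ}
    (ha : 0 ≤ a) :
    distExp g P Y = (∫ z in Set.Ioc 0 a, hker P g Y z) + ∫ z in Set.Ioi a, hker P g Y z := by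
  rw [distExp_eq_hker, ← Set.Ioc_union_Ioi_eq_Ioi ha,
    setIntegral_union Set.Ioc_disjoint_Ioi_same measurableSet_Ioi
      (hker_integrableOn P g Y hg hc Set.Ioc_subset_Ioi_self)
      (hker_integrableOn P g Y hg hc (Set.Ioi_subset_Ioi ha))]

lemma distExp_mono (Y₁ Y₂ : Ω → ℝ) (hg : IsDistortion g) (h12 : ∀ ω, Y₁ ω ≤ Y₂ ω) {c : ℝ}
    (hc : ∀ᵐ ω ∂P, Y₂ ω ≤ c) : distExp g P Y₁ ≤ distExp g P Y₂ := by
  have hc1 : ∀ᵐ ω ∂P, Y₁ ω ≤ c := hc.mono fun ω h => (h12 ω).trans h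
  rw [distExp_eq_hker, distExp_eq_hker]
  refine setIntegral_mono_on (hker_integrableOn P g Y₁ hg hc1 subset_rfl)
    (hker_integrableOn P g Y₂ hg hc subset_rfl) measurableSet_Ioi ?_
  intro z _
  have h21 : cdfOf P Y₂ z ≤ cdfOf P Y₁ z :=
    ENNReal.toReal_mono (measure_ne_top P _)
      (measure_mono fun ω (h : Y₂ ω ≤ z) => (h12 ω).trans h)
  exact hg.1 ⟨by linarith [cdf_le_one P Y₁ z], by linarith [cdf_nonneg P Y₁ z]⟩
    ⟨by linarith [cdf_le_one P Y₂ z], by linarith [cdf_nonneg P Y₂ z]⟩ (by linarith)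

lemma Rfun_le_low {η q x z : ℝ} (hq : η ≤ q) (hz : z < η) : Rfun η q x ≤ z ↔ x ≤ z := by
  rw [Rfun]
  split_ifs with h1 h2
  · exact Iff.rfl
  · constructor
    · intro h; linarith
    · intro h; linarith
  · constructor
    · intro h; linarith
    · intro h; push_neg at h1; linarith

lemma Rfun_le_high {η q x z : ℝ} (hq : η ≤ q) (hz : η ≤ z) :
    Rfun η q x ≤ z ↔ x ≤ z + q - η := by
  rw [Rfun]
  split_ifs with h1 h2
  · constructor
    · intro h; linarith
    · intro h; linarith
  · constructor
    · intro _; linarith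
    · intro _; exact hz
  · constructor
    · intro h; linarith
    · intro h; linarith

lemma Rfun_le_self {η q x : ℝ} (hη : 0 ≤ η) (hq : η ≤ q) : Rfun η q x ≤ x := by
  rw [Rfun]; split_ifs with h1 h2 <;> linarith

lemma integral_Ioi_add_const (f : ℝ → ℝ) (a c : ℝ) :
    (∫ z in Set.Ioi a, f (z + c)) = ∫ z in Set.Ioi (a + c), f z := by
  have h₁ : MeasurePreserving (fun x : ℝ => x + c) volume volume :=
    measurePreserving_add_right volume c
  have h₂ : MeasurableEmbedding (fun x : ℝ => x + c) :=
    (MeasurableEquiv.addRight c).measurableEmbedding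
  rw [← h₁.setIntegral_image_emb h₂ f (Set.Ioi a), Set.image_add_const_Ioi]

end LayerAux

namespace LayerAux

variable {Ω : Type*} [MeasurableSpace Ω] (P : Measure Ω) [IsProbabilityMeasure P]
variable (g : ℝ → ℝ) (X : Ω → ℝ)

lemma ae_ne_vol (η : ℝ) : ∀ᵐ z : ℝ, z ≠ η := by
  rw [ae_iff]
  have : {a : ℝ | ¬ a ≠ η} = {η} := by ext a; simp [not_not]
  rw [this]
  exact Real.volume_singleton

lemma distExp_Rfun (hg : IsDistortion g) {M : ℝ} (hM : ∀ᵐ ω ∂P, X ω ≤ M) {η q : ℝ}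
    (hη : 0 ≤ η) (hq : η ≤ q) :
    distExp g P (fun ω => Rfun η q (X ω)) =
      (∫ z in Set.Ioc 0 η, hker P g X z) + ∫ z in Set.Ioi q, hker P g X z := by
  set Y := fun ω => Rfun η q (X ω) with hYdef
  have hYb : ∀ᵐ ω ∂P, Y ω ≤ M := hM.mono fun ω h => (Rfun_le_self hη hq).trans h
  rw [distExp_split P g Y hg hYb hη]
  congr 1
  · refine setIntegral_congr_ae measurableSet_Ioc ?_
    filter_upwards [ae_ne_vol η] with z hz hmem
    have hzlt : z < η := lt_of_le_of_ne hmem.2 hz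
    have hset : {ω | Y ω ≤ z} = {ω | X ω ≤ z} := by
      ext ω; exact Rfun_le_low hq hzlt
    simp only [hker, cdfOf, hset]
  · calc ∫ z in Set.Ioi η, hker P g Y z
        = ∫ z in Set.Ioi η, hker P g X (z + (q - η)) := by
          refine setIntegral_congr_fun measurableSet_Ioi fun z hz => ?_
          have hset : {ω | Y ω ≤ z} = {ω | X ω ≤ z + (q - η)} := by
            ext ω
            have := Rfun_le_high (x := X ω) hq (le_of_lt hz)
            rw [hYdef]
            simp only [Set.mem_setOf_eq]
            rw [this]
            constructor <;> intro h <;> linarith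
          simp only [hker, cdfOf, hset]
      _ = ∫ z in Set.Ioi (η + (q - η)), hker P g X z := integral_Ioi_add_const _ _ _
      _ = ∫ z in Set.Ioi q, hker P g X z := by ring_nf

lemma distExp_min (hg : IsDistortion g) {η : ℝ} (hη : 0 ≤ η) :
    distExp g P (fun ω => min (X ω) η) = ∫ z in Set.Ioc 0 η, hker P g X z := by
  have hb : ∀ᵐ ω ∂P, min (X ω) η ≤ η := Filter.Eventually.of_forall fun ω => min_le_right _ _
  rw [distExp_split P g _ hg hb hη]
  have h2 : (∫ z in Set.Ioi η, hker P g (fun ω => min (X ω) η) z) = 0 := by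
    rw [setIntegral_congr_fun measurableSet_Ioi
      (fun z hz => hker_eq_zero P g _ hg hb (le_of_lt hz))]
    simp
  rw [h2, add_zero]
  refine setIntegral_congr_ae measurableSet_Ioc ?_
  filter_upwards [ae_ne_vol η] with z hz hmem
  have hzlt : z < η := lt_of_le_of_ne hmem.2 hz
  have hset : {ω | min (X ω) η ≤ z} = {ω | X ω ≤ z} := by
    ext ω
    simp only [Set.mem_setOf_eq, min_le_iff]
    constructor
    · rintro (h | h)
      · exact h
      · linarith
    · exact Or.inl
  simp only [hker, cdfOf, hset]

end LayerAux


/-- **Proposition 3.2.** If `E^g[R_η(X)] < π₀ ≤ E^g[X]`, then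
`q* = max{ q ∈ [η, M) : E^g[R_{η,q}(X)] = π₀ }` is well defined, and `R_{η,q*}` is optimal for
maximizing `ℙ(R(X) ≤ η)` over `R ∈ 𝓡` with `E^g[R(X)] = π₀`; the optimal value is
`F_X(q*) = ℙ(R_{η,q*}(X) ≤ η)`. -/

theorem layer_optimal_large_premium {Ω : Type*} [MeasurableSpace Ω]
    (P : Measure Ω) [IsProbabilityMeasure P]
    (X : Ω → ℝ) (hX : Measurable X) (hXnn : ∀ ω, 0 ≤ X ω)
    (M : ℝ) (hMbound : ∀ᵐ ω ∂P, X ω ≤ M)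
    (hMleast : ∀ M' : ℝ, (∀ᵐ ω ∂P, X ω ≤ M') → M ≤ M')
    (g : ℝ → ℝ) (hg : IsDistortion g)
    (η : ℝ) (hη : η ∈ Set.Icc (0 : ℝ) M)
    (π₀ : ℝ) (hπ₀lb : distExp g P (fun ω => min (X ω) η) < π₀)
    (hπ₀ub : π₀ ≤ distExp g P X) :
    ∃ qs : ℝ,
      IsGreatest {q : ℝ | q ∈ Set.Ico η M ∧
        distExp g P (fun ω => Rfun η q (X ω)) = π₀} qs ∧
      (P {ω | Rfun η qs (X ω) ≤ η}).toReal = cdfOf P X qs ∧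
      ∀ R : ℝ → ℝ, IsRetention R → distExp g P (fun ω => R (X ω)) = π₀ →
        (P {ω | R (X ω) ≤ η}).toReal ≤ cdfOf P X qs := by
  classical
  obtain ⟨hη0, hηM⟩ := hη
  set F : ℝ → ℝ := LayerAux.hker P g X with hF
  set A : ℝ := ∫ z in Set.Ioc 0 η, F z with hA
  set ψ : ℝ → ℝ := fun q => ∫ z in Set.Ioi q, F z with hψ
  have hmin : distExp g P (fun ω => min (X ω) η) = A := LayerAux.distExp_min P g X hg hη0
  have hAlt : A < π₀ := hmin ▸ hπ₀lb
  have hXde : distExp g P X = A + ψ η := LayerAux.distExp_split P g X hg hMbound hη0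
  have hRde : ∀ q, η ≤ q → distExp g P (fun ω => Rfun η q (X ω)) = A + ψ q :=
    fun q hq => LayerAux.distExp_Rfun P g X hg hMbound hη0 hq
  -- ψ facts
  have hint : ∀ {s : Set ℝ}, s ⊆ Set.Ioi 0 → IntegrableOn F s :=
    fun hs => LayerAux.hker_integrableOn P g X hg hMbound hs
  have hψsplit : ∀ a b : ℝ, 0 ≤ a → a ≤ b → ψ a = (∫ z in Set.Ioc a b, F z) + ψ b := by
    intro a b ha hab
    rw [hψ]
    simp only
    rw [← Set.Ioc_union_Ioi_eq_Ioi hab,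
      setIntegral_union Set.Ioc_disjoint_Ioi_same measurableSet_Ioi
        (hint (Set.Ioc_subset_Ioi_self.trans (Set.Ioi_subset_Ioi ha)))
        (hint (Set.Ioi_subset_Ioi (ha.trans hab)))]
  have hIccnn : ∀ a b : ℝ, (0:ℝ) ≤ ∫ z in Set.Ioc a b, F z := fun a b =>
    setIntegral_nonneg measurableSet_Ioc fun z _ => (LayerAux.hker_mem P g X hg z).1
  have hIccub : ∀ a b : ℝ, 0 ≤ a → a ≤ b → (∫ z in Set.Ioc a b, F z) ≤ b - a := by
    intro a b ha hab
    calc (∫ z in Set.Ioc a b, F z) ≤ ∫ _z in Set.Ioc a b, (1:ℝ) :=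
          setIntegral_mono_on (hint (Set.Ioc_subset_Ioi_self.trans (Set.Ioi_subset_Ioi ha)))
            (integrableOn_const measure_Ioc_lt_top.ne) measurableSet_Ioc
            (fun z _ => (LayerAux.hker_mem P g X hg z).2)
      _ = b - a := by
          simp [Real.volume_Ioc, ENNReal.toReal_ofReal (by linarith : (0:ℝ) ≤ b - a), hab]
  have hψanti : ∀ a b : ℝ, 0 ≤ a → a ≤ b → ψ b ≤ ψ a := by
    intro a b ha hab
    rw [hψsplit a b ha hab]
    linarith [hIccnn a b]
  have hψlip : ∀ a b : ℝ, 0 ≤ a → a ≤ b → ψ a ≤ ψ b + (b - a) := by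
    intro a b ha hab
    rw [hψsplit a b ha hab]
    linarith [hIccub a b ha hab]
  have hψM : ∀ z, M ≤ z → ψ z = 0 := by
    intro z hz
    rw [hψ]
    simp only
    rw [setIntegral_congr_fun measurableSet_Ioi
      (fun y hy => LayerAux.hker_eq_zero P g X hg hMbound (hz.trans (le_of_lt hy)))]
    simp
  -- continuity of ψ on [η, M]
  have hψcont : ContinuousOn ψ (Set.Icc η M) := by
    refine (LipschitzOnWith.of_dist_le_mul (K := 1) ?_).continuousOn
    intro x hx y hy
    rw [NNReal.coe_one, one_mul, Real.dist_eq, Real.dist_eq]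
    rcases le_total x y with h | h
    · have h1 := hψanti x y (hη0.trans hx.1) h
      have h2 := hψlip x y (hη0.trans hx.1) h
      have hxy : |x - y| = y - x := by
        rw [abs_of_nonpos (by linarith)]; ring
      rw [hxy, abs_le]
      constructor <;> linarith
    · have h1 := hψanti y x (hη0.trans hy.1) h
      have h2 := hψlip y x (hη0.trans hy.1) h
      have hxy : |x - y| = x - y := abs_of_nonneg (by linarith)
      rw [hxy, abs_le]
      constructor <;> linarith
  -- existence of a solution via IVT
  have hψη : π₀ - A ≤ ψ η := by
    have h := hπ₀ub
    rw [hXde] at h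
    linarith
  have hψMval : ψ M = 0 := hψM M le_rfl
  have hIVT : ∃ q ∈ Set.Icc η M, ψ q = π₀ - A := by
    have h := intermediate_value_Icc' hηM hψcont
    have : π₀ - A ∈ Set.Icc (ψ M) (ψ η) := ⟨by rw [hψMval]; linarith, hψη⟩
    obtain ⟨q, hq, hqv⟩ := h this
    exact ⟨q, hq, hqv⟩
  set S := {q : ℝ | q ∈ Set.Ico η M ∧ distExp g P (fun ω => Rfun η q (X ω)) = π₀} with hS
  have hSmem : ∀ q, q ∈ S ↔ (q ∈ Set.Ico η M ∧ ψ q = π₀ - A) := by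
    intro q
    constructor
    · rintro ⟨hq1, hq2⟩
      refine ⟨hq1, ?_⟩
      rw [hRde q hq1.1] at hq2
      linarith
    · rintro ⟨hq1, hq2⟩
      exact ⟨hq1, by rw [hRde q hq1.1]; linarith⟩
  obtain ⟨q₁, hq₁Icc, hq₁v⟩ := hIVT
  have hq₁ne : q₁ ≠ M := by
    intro h
    rw [h, hψMval] at hq₁v
    linarith
  have hq₁S : q₁ ∈ S := (hSmem q₁).2 ⟨⟨hq₁Icc.1, lt_of_le_of_ne hq₁Icc.2 hq₁ne⟩, hq₁v⟩
  have hSne : S.Nonempty := ⟨q₁, hq₁S⟩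
  have hSbdd : BddAbove S := ⟨M, fun q hq => le_of_lt ((hSmem q).1 hq).1.2⟩
  set qs := sSup S with hqs
  have hqsub : qs ≤ M := csSup_le hSne fun q hq => le_of_lt ((hSmem q).1 hq).1.2
  have hqslb : η ≤ qs := le_trans hq₁Icc.1 (le_csSup hSbdd hq₁S)
  have hqs0 : 0 ≤ qs := hη0.trans hqslb
  have hψqs : ψ qs = π₀ - A := by
    have hle : ψ qs ≤ π₀ - A := by
      have := hψanti q₁ qs (hη0.trans hq₁Icc.1) (le_csSup hSbdd hq₁S)
      linarith
    have hge : π₀ - A ≤ ψ qs := by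
      by_contra hcon
      push_neg at hcon
      set ε := (π₀ - A) - ψ qs with hε
      have hεpos : 0 < ε := by linarith
      obtain ⟨q', hq'S, hq'gt⟩ := exists_lt_of_lt_csSup hSne (show qs - ε < sSup S by linarith)
      have hq'le : q' ≤ qs := le_csSup hSbdd hq'S
      have hq'v : ψ q' = π₀ - A := ((hSmem q').1 hq'S).2
      have := hψlip q' qs (hη0.trans ((hSmem q').1 hq'S).1.1) hq'le
      linarith
    linarith
  have hqslt : qs < M := by
    rcases lt_or_eq_of_le hqsub with h | h
    · exact h
    · exfalso
      rw [h] at hψqs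
      rw [hψMval] at hψqs
      linarith
  have hqsS : qs ∈ S := (hSmem qs).2 ⟨⟨hqslb, hqslt⟩, hψqs⟩
  refine ⟨qs, ⟨hqsS, fun q hq => le_csSup hSbdd hq⟩, ?_, ?_⟩
  · -- probability identity
    have hset : {ω | Rfun η qs (X ω) ≤ η} = {ω | X ω ≤ qs} := by
      ext ω
      simp only [Set.mem_setOf_eq]
      rw [LayerAux.Rfun_le_high hqslb le_rfl]
      constructor <;> intro h <;> linarith
    rw [hset]
    rfl
  · -- optimality
    intro R hR hRπ
    obtain ⟨hR0, hRmono, hRlip⟩ := hR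
    have hRnn : ∀ x : ℝ, 0 ≤ x → 0 ≤ R x := by
      intro x hx
      have := hRmono (Set.self_mem_Ici) hx hx
      rwa [hR0] at this
    have hRlex : ∀ x : ℝ, 0 ≤ x → R x ≤ x := by
      intro x hx
      have := hRlip (Set.self_mem_Ici) hx hx
      simp only [hR0, sub_zero] at this
      linarith
    have hRlipd : ∀ x y : ℝ, 0 ≤ x → x ≤ y → R y ≤ R x + (y - x) := by
      intro x y hx hxy
      have := hRlip (Set.mem_Ici.2 hx) (Set.mem_Ici.2 (hx.trans hxy)) hxy
      simp only at this
      linarith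
    by_cases hcase : ∀ x : ℝ, 0 ≤ x → R x ≤ η
    · exfalso
      have hptw : ∀ ω, R (X ω) ≤ min (X ω) η :=
        fun ω => le_min (hRlex _ (hXnn ω)) (hcase _ (hXnn ω))
      have hmono := LayerAux.distExp_mono P g (fun ω => R (X ω)) (fun ω => min (X ω) η)
        hg hptw (c := η) (Filter.Eventually.of_forall fun ω => min_le_right _ _)
      rw [hRπ, hmin] at hmono
      linarith
    · push_neg at hcase
      obtain ⟨x₀, hx₀nn, hx₀⟩ := hcase
      set D := {x : ℝ | 0 ≤ x ∧ R x ≤ η} with hD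
      have hDne : D.Nonempty := ⟨0, le_rfl, by rw [hR0]; exact hη0⟩
      have hDbdd : BddAbove D := by
        refine ⟨x₀, fun x hx => ?_⟩
        by_contra hcon
        push_neg at hcon
        have := hRmono (Set.mem_Ici.2 hx₀nn) (Set.mem_Ici.2 hx.1) (le_of_lt hcon)
        exact absurd (lt_of_lt_of_le hx₀ (this.trans hx.2)) (lt_irrefl η)
      set d := sSup D with hd
      have hd0 : 0 ≤ d :=
        le_csSup hDbdd (show (0:ℝ) ∈ D from ⟨le_rfl, by rw [hR0]; exact hη0⟩)
      have hRd : R d ≤ η := by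
        by_contra hcon
        push_neg at hcon
        set ε := R d - η with hε
        have hεpos : 0 < ε := by linarith
        obtain ⟨x, hxD, hxgt⟩ := exists_lt_of_lt_csSup hDne
          (show d - ε < sSup D by rw [← hd]; linarith)
        have hxle : x ≤ d := le_csSup hDbdd hxD
        have := hRlipd x d hxD.1 hxle
        have h2 := hxD.2
        linarith
      have hset : {ω | R (X ω) ≤ η} = {ω | X ω ≤ d} := by
        ext ω
        simp only [Set.mem_setOf_eq]
        constructor
        · intro h
          exact le_csSup hDbdd ⟨hXnn ω, h⟩
        · intro h
          exact (hRmono (Set.mem_Ici.2 (hXnn ω)) (Set.mem_Ici.2 hd0) h).trans hRd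
      rw [hset]
      show cdfOf P X d ≤ cdfOf P X qs
      rcases le_or_gt d qs with hdl | hdl
      · exact LayerAux.cdf_mono P X hdl
      · exfalso
        have hηd : η ≤ d := hqslb.trans (le_of_lt hdl)
        have hptw : ∀ ω, R (X ω) ≤ Rfun η d (X ω) := by
          intro ω
          set x := X ω with hx
          have hxnn := hXnn ω
          rw [Rfun]
          split_ifs with h1 h2
          · exact hRlex x hxnn
          · exact (hRmono (Set.mem_Ici.2 hxnn) (Set.mem_Ici.2 hd0) h2).trans hRd
          · push_neg at h1 h2
            have := hRlipd d x hd0 (le_of_lt h2)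
            linarith
        have hbound : ∀ᵐ ω ∂P, Rfun η d (X ω) ≤ M :=
          hMbound.mono fun ω h => (LayerAux.Rfun_le_self hη0 hηd).trans h
        have hmono := LayerAux.distExp_mono P g (fun ω => R (X ω))
          (fun ω => Rfun η d (X ω)) hg hptw hbound
        rw [hRπ, hRde d hηd] at hmono
        have hψd : π₀ - A ≤ ψ d := by linarith
        have hψd2 : ψ d ≤ π₀ - A := by
          have := hψanti qs d hqs0 (le_of_lt hdl)
          linarith
        rcases lt_or_ge d M with hdM | hdM
        · have hdS : d ∈ S := (hSmem d).2 ⟨⟨hηd, hdM⟩, le_antisymm hψd2 hψd⟩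
          exact absurd (le_csSup hSbdd hdS) (not_le.2 hdl)
        · have := hψM d hdM
          linarith
end

section
/- Let X be a nonnegative random variable with essential supremum M < ∞, survival function S_X = 1 − F_X, g a distortion function, ϱ ≥ 0, and w₀, ξ real numbers satisfying w₀ − min{π^g(X), M} < ξ < w₀. Define ψ(π) = E^g[X] − π/(1+ϱ) − ∫_0^{w₀−π−ξ} g(S_X(y)) dy for π ∈ [0, w₀−ξ]. Assume ψ(π) > 0 for all π ∈ [0, w₀−ξ]. Set π̄ = inf{ π ∈ ℝ : g(S_X(w₀−π−ξ)) ≥ 1/(1+ϱ) }, π* = max{0, min{π̄, w₀−ξ}}, η* = w₀ − π* − ξ, and q* = max{ q ∈ [η*, M) : E^g[I_{η*,q}(X)] = π*/(1+ϱ) }. Then the ceded loss function I_{η*,q*} satisfies π^g(I_{η*,q*}(X)) = π*, and it is optimal for the problem sup_{I∈𝓘} ℙ( w₀ − X + I(X) − π^g(I(X)) ≥ ξ ): for every I ∈ 𝓘, ℙ( w₀ − X + I(X) − π^g(I(X)) ≥ ξ ) ≤ F_X(q*) = ℙ( w₀ − X + I_{η*,q*}(X) − π* ≥ ξ ). -/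
open MeasureTheory

/-- The ceded loss function `I_{η,q}`: `0` on `[0,η]`, `x − η` on `(η,q]`, `q − η` beyond. -/
noncomputable def Ifun (η q : ℝ) : ℝ → ℝ := fun x =>
  if x ≤ η then 0 else if x ≤ q then x - η else q - η

/-- A ceded loss function: `I(0) = 0`, with both `I` and `x ↦ x − I(x)` increasing on
`[0,∞)`. -/
def IsCeded (I : ℝ → ℝ) : Prop :=
  I 0 = 0 ∧ MonotoneOn I (Set.Ici 0) ∧ MonotoneOn (fun x => x - I x) (Set.Ici 0)


open Set

section aux

variable {Ω : Type*} [MeasurableSpace Ω] (P : Measure Ω) [IsProbabilityMeasure P]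
variable {g : ℝ → ℝ}

lemma cdf_nonneg (W : Ω → ℝ) (z : ℝ) : 0 ≤ cdfOf P W z := ENNReal.toReal_nonneg

lemma cdf_le_one (W : Ω → ℝ) (z : ℝ) : cdfOf P W z ≤ 1 := by
  have h := prob_le_one (μ := P) (s := {ω | W ω ≤ z})
  have := ENNReal.toReal_mono (by simp) h
  simpa [cdfOf] using this

lemma cdf_mono (W : Ω → ℝ) : Monotone (cdfOf P W) := by
  intro a b hab
  exact ENNReal.toReal_mono (measure_ne_top P _)
    (measure_mono fun ω h => le_trans h hab)

lemma cdf_eq_one (W : Ω → ℝ) {M' : ℝ} (hW : ∀ᵐ ω ∂P, W ω ≤ M') {z : ℝ} (hz : M' ≤ z) :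
    cdfOf P W z = 1 := by
  have h0 : P {ω | W ω ≤ z}ᶜ = 0 := by
    refine measure_mono_null ?_ (ae_iff.mp hW)
    intro ω hω
    simp only [mem_compl_iff, mem_setOf_eq] at hω ⊢
    intro h; exact hω (h.trans hz)
  have : {ω | W ω ≤ z} =ᵐ[P] (univ : Set Ω) := by
    rw [ae_eq_univ]; exact h0
  simp [cdfOf, measure_congr this]

variable (hg : IsDistortion g)
include hg

lemma distInt_mem (W : Ω → ℝ) (z : ℝ) : g (1 - cdfOf P W z) ∈ Icc (0:ℝ) 1 :=
  hg.2.1 _ ⟨by linarith [cdf_le_one P W z], by linarith [cdf_nonneg P W z]⟩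

lemma distInt_antitone (W : Ω → ℝ) : Antitone fun z => g (1 - cdfOf P W z) := by
  intro a b hab
  exact hg.1 ⟨by linarith [cdf_le_one P W b], by linarith [cdf_nonneg P W b]⟩
    ⟨by linarith [cdf_le_one P W a], by linarith [cdf_nonneg P W a]⟩
    (by linarith [cdf_mono P W hab])

lemma distInt_zero (W : Ω → ℝ) {M' : ℝ} (hW : ∀ᵐ ω ∂P, W ω ≤ M') {z : ℝ} (hz : M' ≤ z) :
    g (1 - cdfOf P W z) = 0 := by
  rw [cdf_eq_one P W hW hz]; simpa using hg.2.2.1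

lemma distInt_integrableOn (W : Ω → ℝ) {M' : ℝ} (hW : ∀ᵐ ω ∂P, W ω ≤ M') :
    IntegrableOn (fun z => g (1 - cdfOf P W z)) (Ioi (0:ℝ)) := by
  set M'' := max M' 0 with hM''
  have hant := distInt_antitone P hg W
  have h1 : IntegrableOn (fun z => g (1 - cdfOf P W z)) (Ioc (0:ℝ) M'') := by
    rw [← intervalIntegrable_iff_integrableOn_Ioc_of_le (le_max_right M' 0)]
    exact hant.intervalIntegrable
  have h2 : IntegrableOn (fun z => g (1 - cdfOf P W z)) (Ioi M'') := by
    have heq : EqOn (fun z => g (1 - cdfOf P W z)) (fun _ => (0:ℝ)) (Ioi M'') := by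
      intro z hz
      exact distInt_zero P hg W hW ((le_max_left M' 0).trans (le_of_lt hz))
    exact (integrableOn_congr_fun heq measurableSet_Ioi).mpr (integrableOn_zero)
  have : Ioc (0:ℝ) M'' ∪ Ioi M'' = Ioi (0:ℝ) := Ioc_union_Ioi_eq_Ioi (le_max_right M' 0)
  rw [← this]
  exact h1.union h2

lemma distExp_nonneg (W : Ω → ℝ) : 0 ≤ distExp g P W :=
  setIntegral_nonneg measurableSet_Ioi fun z _ => (distInt_mem P hg W z).1

lemma distExp_mono (W₁ W₂ : Ω → ℝ) (h12 : ∀ ω, W₁ ω ≤ W₂ ω) {M' : ℝ}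
    (hW₂ : ∀ᵐ ω ∂P, W₂ ω ≤ M') : distExp g P W₁ ≤ distExp g P W₂ := by
  have hW₁ : ∀ᵐ ω ∂P, W₁ ω ≤ M' := hW₂.mono fun ω h => (h12 ω).trans h
  refine setIntegral_mono_on (distInt_integrableOn P hg W₁ hW₁)
    (distInt_integrableOn P hg W₂ hW₂) measurableSet_Ioi fun z _ => ?_
  have hc : cdfOf P W₂ z ≤ cdfOf P W₁ z :=
    ENNReal.toReal_mono (measure_ne_top P _)
      (measure_mono fun ω h => le_trans (h12 ω) h)
  exact hg.1 ⟨by linarith [cdf_le_one P W₁ z], by linarith [cdf_nonneg P W₁ z]⟩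
    ⟨by linarith [cdf_le_one P W₂ z], by linarith [cdf_nonneg P W₂ z]⟩ (by linarith)

omit hg in
lemma Ifun_le {η q : ℝ} (hηq : η ≤ q) (x : ℝ) : Ifun η q x ≤ q - η := by
  unfold Ifun; split_ifs <;> linarith

omit hg in
lemma Ifun_le_iff {η q x z : ℝ} (hz0 : 0 ≤ z) (hz : z < q - η) :
    Ifun η q x ≤ z ↔ x ≤ z + η := by
  unfold Ifun; split_ifs with h1 h2
  · constructor <;> intro <;> linarith
  · constructor <;> intro <;> linarith
  · push_neg at h1 h2
    constructor <;> intro <;> linarith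

lemma distExp_Ifun (X : Ω → ℝ) {η q : ℝ} (hη : 0 ≤ η) (hηq : η ≤ q) :
    distExp g P (fun ω => Ifun η q (X ω)) = ∫ y in η..q, g (1 - cdfOf P X y) := by
  set V := fun z => g (1 - cdfOf P (fun ω => Ifun η q (X ω)) z) with hV
  have hZb : ∀ᵐ ω ∂P, Ifun η q (X ω) ≤ q - η :=
    Filter.Eventually.of_forall fun ω => Ifun_le hηq _
  have hVint : IntegrableOn V (Ioi (0:ℝ)) := distInt_integrableOn P hg _ hZb
  have hqη : (0:ℝ) ≤ q - η := by linarith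
  have hsplit : Ioc (0:ℝ) (q - η) ∪ Ioi (q - η) = Ioi (0:ℝ) := Ioc_union_Ioi_eq_Ioi hqη
  have hzero : ∀ z ∈ Ioi (q - η), V z = 0 := fun z hz =>
    distInt_zero P hg _ hZb (le_of_lt hz)
  have e1 : distExp g P (fun ω => Ifun η q (X ω)) = ∫ z in Ioi (0:ℝ), V z := rfl
  rw [e1, ← hsplit,
    setIntegral_union (Ioc_disjoint_Ioi le_rfl) measurableSet_Ioi
      (hVint.mono_set (by rw [← hsplit]; exact subset_union_left))
      (hVint.mono_set (by rw [← hsplit]; exact subset_union_right))]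
  have e2 : ∫ z in Ioi (q - η), V z = 0 := by
    rw [setIntegral_congr_fun measurableSet_Ioi hzero]; simp
  rw [e2, add_zero]
  have hne : ∀ᵐ z : ℝ, z ≠ q - η := by
    have : (volume ({q - η} : Set ℝ)) = 0 := measure_singleton _
    rw [ae_iff]; simpa using this
  have e3 : ∫ z in Ioc (0:ℝ) (q - η), V z
      = ∫ z in Ioc (0:ℝ) (q - η), g (1 - cdfOf P X (z + η)) := by
    refine setIntegral_congr_ae measurableSet_Ioc ?_
    filter_upwards [hne] with z hzne hz
    have hzlt : z < q - η := lt_of_le_of_ne hz.2 hzne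
    have hset : {ω | Ifun η q (X ω) ≤ z} = {ω | X ω ≤ z + η} := by
      ext ω; exact Ifun_le_iff (le_of_lt hz.1) hzlt
    simp only [hV, cdfOf, hset]
  rw [e3, ← intervalIntegral.integral_of_le hqη,
    intervalIntegral.integral_comp_add_right (fun y => g (1 - cdfOf P X y)) η]
  norm_num

end aux

/-- **Theorem 3.1(ii).** With `ψ(π) = E^g[X] − π/(1+ϱ) − ∫_0^{w₀−π−ξ} g(S_X(y)) dy`
strictly positive on `[0, w₀−ξ]`, `π̄ = inf{π : g(S_X(w₀−π−ξ)) ≥ 1/(1+ϱ)}`,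
`π* = max{0, min{π̄, w₀−ξ}}`, `η* = w₀ − π* − ξ`, and
`q* = max{q ∈ [η*, M) : E^g[I_{η*,q}(X)] = π*/(1+ϱ)}`, the ceded loss function `I_{η*,q*}`
has premium `π^g(I_{η*,q*}(X)) = π*` and is optimal for
`sup_{I∈𝓘} ℙ(w₀ − X + I(X) − π^g(I(X)) ≥ ξ)`, with optimal value `F_X(q*)`. -/
theorem optimal_reinsurance_without_background {Ω : Type*} [MeasurableSpace Ω]
    (P : Measure Ω) [IsProbabilityMeasure P]
    (X : Ω → ℝ) (hX : Measurable X) (hXnn : ∀ ω, 0 ≤ X ω)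
    (M : ℝ) (hMbound : ∀ᵐ ω ∂P, X ω ≤ M)
    (hMleast : ∀ M' : ℝ, (∀ᵐ ω ∂P, X ω ≤ M') → M ≤ M')
    (g : ℝ → ℝ) (hg : IsDistortion g)
    (ϱ : ℝ) (hϱ : 0 ≤ ϱ)
    (w₀ ξ : ℝ)
    (hξlb : w₀ - min ((1 + ϱ) * distExp g P X) M < ξ) (hξub : ξ < w₀)
    (hψpos : ∀ π ∈ Set.Icc (0 : ℝ) (w₀ - ξ),
      0 < distExp g P X - π / (1 + ϱ) - ∫ y in (0 : ℝ)..(w₀ - π - ξ), g (1 - cdfOf P X y))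
    (πb : ℝ) (hπb : πb = sInf {π : ℝ | 1 / (1 + ϱ) ≤ g (1 - cdfOf P X (w₀ - π - ξ))})
    (πs : ℝ) (hπs : πs = max 0 (min πb (w₀ - ξ)))
    (ηs : ℝ) (hηs : ηs = w₀ - πs - ξ) :
    ∃ qs : ℝ,
      IsGreatest {q : ℝ | q ∈ Set.Ico ηs M ∧
        distExp g P (fun ω => Ifun ηs q (X ω)) = πs / (1 + ϱ)} qs ∧
      (1 + ϱ) * distExp g P (fun ω => Ifun ηs qs (X ω)) = πs ∧
      (∀ I : ℝ → ℝ, IsCeded I →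
        (P {ω | ξ ≤ w₀ - X ω + I (X ω)
            - (1 + ϱ) * distExp g P (fun ω' => I (X ω'))}).toReal ≤ cdfOf P X qs) ∧
      cdfOf P X qs = (P {ω | ξ ≤ w₀ - X ω + Ifun ηs qs (X ω) - πs}).toReal := by
  have h1ρ : (0:ℝ) < 1 + ϱ := by linarith
  set G : ℝ → ℝ := fun y => g (1 - cdfOf P X y) with hGdef
  have hGapp : ∀ y, g (1 - cdfOf P X y) = G y := fun _ => rfl
  simp only [hGapp] at hψpos hπb
  have hGant : Antitone G := distInt_antitone P hg X
  have hGmem : ∀ y, G y ∈ Icc (0:ℝ) 1 := fun y => distInt_mem P hg X y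
  have hGM : ∀ y, M ≤ y → G y = 0 := fun y hy => distInt_zero P hg X hMbound hy
  have hGneg : ∀ y, y < 0 → G y = 1 := by
    intro y hy
    have hset : {ω | X ω ≤ y} = (∅ : Set Ω) := by
      ext ω; simp only [mem_setOf_eq, mem_empty_iff_false, iff_false, not_le]
      exact lt_of_lt_of_le hy (hXnn ω)
    show g (1 - cdfOf P X y) = 1
    unfold cdfOf; rw [hset]
    simpa using hg.2.2.2
  have hGii : ∀ a b : ℝ, IntervalIntegrable G volume a b := fun a b =>
    hGant.intervalIntegrable
  have hwξ : 0 < w₀ - ξ := by linarith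
  have hξM : w₀ - ξ < M := by
    have := min_le_right ((1 + ϱ) * distExp g P X) M; linarith
  have hM0 : (0:ℝ) < M := lt_trans hwξ hξM
  set A := {π : ℝ | 1 / (1 + ϱ) ≤ G (w₀ - π - ξ)} with hA
  have hinv0 : (0:ℝ) < 1 / (1 + ϱ) := by positivity
  have hinv1 : 1 / (1 + ϱ) ≤ 1 := by
    rw [div_le_one h1ρ]; linarith
  have hAmem_of : ∀ π : ℝ, w₀ - ξ < π → π ∈ A := by
    intro π hπ
    have : w₀ - π - ξ < 0 := by linarith
    simp only [hA, mem_setOf_eq, hGneg _ this]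
    exact hinv1
  have hAne : A.Nonempty := ⟨w₀ - ξ + 1, hAmem_of _ (by linarith)⟩
  have hAbdd : BddBelow A := by
    refine ⟨w₀ - ξ - M, fun π hπ => ?_⟩
    by_contra hcon; push_neg at hcon
    have : M < w₀ - π - ξ := by linarith
    have h0 : G (w₀ - π - ξ) = 0 := hGM _ this.le
    simp only [hA, mem_setOf_eq, h0] at hπ
    linarith
  have hπb_le : πb ≤ w₀ - ξ := by
    refine le_of_forall_pos_le_add fun ε hε => ?_
    have hmem : (w₀ - ξ + ε) ∈ A := hAmem_of _ (by linarith)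
    calc πb = sInf A := hπb
      _ ≤ w₀ - ξ + ε := csInf_le hAbdd hmem
  have hπs_eq : πs = max 0 πb := by rw [hπs, min_eq_left hπb_le]
  have hπs0 : 0 ≤ πs := by rw [hπs_eq]; exact le_max_left _ _
  have hπsle : πs ≤ w₀ - ξ := by rw [hπs_eq]; exact max_le hwξ.le hπb_le
  have hπbπs : πb ≤ πs := by rw [hπs_eq]; exact le_max_right _ _
  have hηs0 : 0 ≤ ηs := by rw [hηs]; linarith
  have hηsM : ηs < M := by rw [hηs]; linarith
  have hP1 : ∀ y, y < ηs → 1 / (1 + ϱ) ≤ G y := by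
    intro y hy
    have hπ' : sInf A < w₀ - ξ - y := by
      rw [← hπb]; rw [hηs] at hy; linarith
    obtain ⟨a, haA, ha⟩ := exists_lt_of_csInf_lt hAne hπ'
    have h1 : 1 / (1 + ϱ) ≤ G (w₀ - a - ξ) := haA
    have h2 : G (w₀ - a - ξ) ≤ G y := hGant (by linarith)
    linarith
  have hP2 : ∀ y, 0 < πs → ηs < y → G y ≤ 1 / (1 + ϱ) := by
    intro y hpos hy
    have hπbs : πs = πb := by
      rcases max_cases 0 πb with ⟨h1, h2⟩ | ⟨h1, h2⟩
      · rw [hπs_eq, h1] at hpos ⊢; linarith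
      · rw [hπs_eq, h1]
    by_contra hcon; push_neg at hcon
    have hmem : (w₀ - ξ - y) ∈ A := by
      simp only [hA, mem_setOf_eq]
      have : w₀ - (w₀ - ξ - y) - ξ = y := by ring
      rw [this]; exact hcon.le
    have : πb ≤ w₀ - ξ - y := hπb ▸ csInf_le hAbdd hmem
    rw [hηs] at hy; rw [← hπbs] at this; linarith
  -- decomposition of the distorted expectation of X
  have hIoc : IntegrableOn G (Ioc (0:ℝ) M) :=
    (intervalIntegrable_iff_integrableOn_Ioc_of_le hM0.le).mp (hGii 0 M)
  have hE : distExp g P X = (∫ y in (0:ℝ)..ηs, G y) + ∫ y in ηs..M, G y := by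
    have e0 : distExp g P X = ∫ z in Ioi (0:ℝ), G z := rfl
    have hIoi : IntegrableOn G (Ioi (0:ℝ)) := distInt_integrableOn P hg X hMbound
    have hu : Ioc (0:ℝ) M ∪ Ioi M = Ioi (0:ℝ) := Ioc_union_Ioi_eq_Ioi hM0.le
    have e1 : ∫ z in Ioi (0:ℝ), G z = (∫ z in Ioc (0:ℝ) M, G z) + ∫ z in Ioi M, G z := by
      rw [← hu, setIntegral_union (Ioc_disjoint_Ioi le_rfl) measurableSet_Ioi
        (hIoi.mono_set (by rw [← hu]; exact subset_union_left))
        (hIoi.mono_set (by rw [← hu]; exact subset_union_right))]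
    have e2 : ∫ z in Ioi M, G z = 0 := by
      rw [setIntegral_congr_fun measurableSet_Ioi (fun z hz => hGM z (le_of_lt hz))]
      simp
    rw [e0, e1, e2, add_zero, ← intervalIntegral.integral_of_le hM0.le,
      ← intervalIntegral.integral_add_adjacent_intervals (hGii 0 ηs) (hGii ηs M)]
  set c := πs / (1 + ϱ) with hc
  have hc0 : 0 ≤ c := div_nonneg hπs0 h1ρ.le
  set h : ℝ → ℝ := fun q => ∫ y in ηs..q, G y with hh
  have hψs := hψpos πs ⟨hπs0, hπsle⟩
  have hψ' : c < h M := by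
    rw [← hηs] at hψs
    simp only [hh]
    rw [hE] at hψs
    have : (∫ y in (0:ℝ)..ηs, G y) = ∫ y in (0:ℝ)..ηs, G y := rfl
    linarith [hψs]
  have hmono_h : ∀ a b : ℝ, a ≤ b → h a ≤ h b := by
    intro a b hab
    have e := intervalIntegral.integral_add_adjacent_intervals (hGii ηs a) (hGii a b)
    have hnn : 0 ≤ ∫ y in a..b, G y :=
      intervalIntegral.integral_nonneg hab fun y _ => (hGmem y).1
    simp only [hh]; rw [← e]; linarith
  have hcont : ContinuousOn h (Icc ηs M) := by
    have := intervalIntegral.continuousOn_primitive_interval' (hGii ηs M) left_mem_uIcc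
    rwa [uIcc_of_le hηsM.le] at this
  have hIVT : ∃ q₀ ∈ Icc ηs M, h q₀ = c := by
    have hmemc : c ∈ Icc (h ηs) (h M) := by
      constructor
      · simp only [hh, intervalIntegral.integral_same]; exact hc0
      · exact hψ'.le
    obtain ⟨q₀, hq₀, hq₀c⟩ := intermediate_value_Icc hηsM.le hcont hmemc
    exact ⟨q₀, hq₀, hq₀c⟩
  set L := {q : ℝ | q ∈ Icc ηs M ∧ h q = c} with hL
  obtain ⟨q₀, hq₀I, hq₀c⟩ := hIVT
  have hLne : L.Nonempty := ⟨q₀, hq₀I, hq₀c⟩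
  have hLbdd : BddAbove L := ⟨M, fun q hq => hq.1.2⟩
  have hLclosed : IsClosed L := by
    have : L = Icc ηs M ∩ h ⁻¹' {c} := by
      ext q; simp [hL, mem_preimage, mem_singleton_iff, and_comm]
    rw [this]
    exact hcont.preimage_isClosed_of_isClosed isClosed_Icc isClosed_singleton
  have hLcomp : IsCompact L :=
    isCompact_Icc.of_isClosed_subset hLclosed fun q hq => hq.1
  set qs := sSup L with hqs
  have hqsL : qs ∈ L := hLcomp.sSup_mem hLne
  have hqs_lt_M : qs < M := by
    rcases lt_or_eq_of_le hqsL.1.2 with h' | h'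
    · exact h'
    · exfalso; rw [h'] at hqsL; rw [hqsL.2] at hψ'; exact lt_irrefl _ hψ'
  have hdE : ∀ q, ηs ≤ q → distExp g P (fun ω => Ifun ηs q (X ω)) = h q := by
    intro q hq
    rw [distExp_Ifun P hg X hηs0 hq]
  -- the event identity for Ifun
  have hmain_iff : ∀ x : ℝ, (ξ ≤ w₀ - x + Ifun ηs qs x - πs) ↔ x ≤ qs := by
    intro x
    have hηq : ηs ≤ qs := hqsL.1.1
    have he : ηs = w₀ - πs - ξ := hηs
    unfold Ifun
    split_ifs with h1 h2
    · constructor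
      · intro _; exact le_trans h1 hηq
      · intro _; linarith
    · push_neg at h1
      constructor
      · intro _; exact h2
      · intro _; linarith
    · push_neg at h1 h2
      constructor
      · intro hcond; linarith
      · intro hcond; linarith
  have hmain_set : {ω | ξ ≤ w₀ - X ω + Ifun ηs qs (X ω) - πs} = {ω | X ω ≤ qs} := by
    ext ω; exact hmain_iff (X ω)
  refine ⟨qs, ⟨⟨⟨hqsL.1.1, hqs_lt_M⟩, by rw [hdE qs hqsL.1.1]; exact hqsL.2⟩,
      fun q hq => ?_⟩, ?_, ?_, ?_⟩
  · -- upper bound of the greatest-element set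
    refine le_csSup hLbdd ⟨⟨hq.1.1, hq.1.2.le⟩, ?_⟩
    rw [← hdE q hq.1.1]; exact hq.2
  · -- premium identity
    rw [hdE qs hqsL.1.1, hqsL.2, hc]
    field_simp
  · -- optimality
    intro I hI
    obtain ⟨hI0, hImono, hRmono⟩ := hI
    set EI := distExp g P (fun ω' => I (X ω')) with hEIdef
    set π := (1 + ϱ) * EI with hπdef
    have hInn : ∀ x : ℝ, 0 ≤ x → 0 ≤ I x := by
      intro x hx
      have := hImono (le_refl (0:ℝ)) hx hx
      rw [hI0] at this; exact this
    have hIle : ∀ x : ℝ, 0 ≤ x → I x ≤ x := by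
      intro x hx
      have := hRmono (le_refl (0:ℝ)) hx hx
      simp only [hI0, sub_zero] at this; linarith
    have hIXb : ∀ᵐ ω ∂P, I (X ω) ≤ M :=
      hMbound.mono fun ω hω => le_trans (hIle _ (hXnn ω)) hω
    have hEI0 : 0 ≤ EI := distExp_nonneg P hg _
    have hπ0 : 0 ≤ π := mul_nonneg h1ρ.le hEI0
    set d := w₀ - π - ξ with hd
    by_cases hdneg : d < 0
    · have hBempty : {ω | ξ ≤ w₀ - X ω + I (X ω) - π} = (∅ : Set Ω) := by
        ext ω
        simp only [mem_setOf_eq, mem_empty_iff_false, iff_false, not_le]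
        have := hIle (X ω) (hXnn ω)
        have hdd : w₀ - π - ξ < 0 := hdneg
        linarith
      rw [hBempty]
      simpa using cdf_nonneg P X qs
    · push_neg at hdneg
      have hdle : d ≤ w₀ - ξ := by rw [hd]; linarith
      have hdM : d < M := lt_of_le_of_lt hdle hξM
      have heqd : ηs - d = π - πs := by rw [hηs, hd]; ring
      have hne : ∀ᵐ y : ℝ, y ≠ ηs := by
        have : (volume ({ηs} : Set ℝ)) = 0 := measure_singleton _
        rw [ae_iff]; simpa using this
      have hkey : (ηs - d) * (1 / (1 + ϱ)) ≤ ∫ y in d..ηs, G y := by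
        rcases le_or_gt d ηs with hcase | hcase
        · have hmono := intervalIntegral.integral_mono_ae_restrict hcase
            (intervalIntegrable_const (c := 1 / (1 + ϱ))) (hGii d ηs)
            (by
              rw [Filter.EventuallyLE, ae_restrict_iff' measurableSet_Icc]
              filter_upwards [hne] with y hy hmem
              exact hP1 y (lt_of_le_of_ne hmem.2 hy))
          rwa [intervalIntegral.integral_const, smul_eq_mul] at hmono
        · have hpos : 0 < πs := by linarith
          have hmono := intervalIntegral.integral_mono_ae_restrict hcase.le
            (hGii ηs d) (intervalIntegrable_const (c := 1 / (1 + ϱ)))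
            (by
              rw [Filter.EventuallyLE, ae_restrict_iff' measurableSet_Icc]
              filter_upwards [hne] with y hy hmem
              exact hP2 y hpos (lt_of_le_of_ne hmem.1 (Ne.symm hy)))
          rw [intervalIntegral.integral_const, smul_eq_mul] at hmono
          rw [intervalIntegral.integral_symm]
          nlinarith [hmono]
      have hclaim : ∀ u : ℝ, qs < u → d ≤ u → ¬ (u - I u ≤ d) := by
        intro u hu1 hu2 hRu
        have hu0 : 0 ≤ u := le_trans hdneg hu2
        have hptw : ∀ ω, Ifun d u (X ω) ≤ I (X ω) := by
          intro ω
          have hx := hXnn ω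
          unfold Ifun
          split_ifs with h1 h2
          · exact hInn _ hx
          · have hh2 := hRmono (a := X ω) (b := u) hx hu0 h2
            simp only at hh2
            linarith
          · push_neg at h1 h2
            have hh3 := hImono (a := u) (b := X ω) hu0 hx h2.le
            linarith
        have hEle : distExp g P (fun ω => Ifun d u (X ω)) ≤ EI :=
          distExp_mono P hg _ _ hptw hIXb
        rw [distExp_Ifun P hg X hdneg hu2] at hEle
        simp only [hGapp] at hEle
        set v := min u M with hv
        have hvqs : qs < v := lt_min hu1 hqs_lt_M
        have hsplit2 : ∫ y in d..u, G y = (∫ y in d..ηs, G y) + h v := by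
          have e1 : ∫ y in d..u, G y = (∫ y in d..v, G y) + ∫ y in v..u, G y :=
            (intervalIntegral.integral_add_adjacent_intervals (hGii d v) (hGii v u)).symm
          have e2 : ∫ y in v..u, G y = 0 := by
            rcases le_or_gt u M with h' | h'
            · rw [hv, min_eq_left h', intervalIntegral.integral_same]
            · rw [hv, min_eq_right h'.le, intervalIntegral.integral_of_le h'.le,
                setIntegral_congr_fun measurableSet_Ioc (fun y hy => hGM y hy.1.le)]
              simp
          have e3 : ∫ y in d..v, G y = (∫ y in d..ηs, G y) + ∫ y in ηs..v, G y :=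
            (intervalIntegral.integral_add_adjacent_intervals (hGii d ηs) (hGii ηs v)).symm
          rw [e1, e2, add_zero, e3]
        have hEIeq : EI = π / (1 + ϱ) := by
          rw [hπdef]; field_simp
        have hch : h v ≤ c := by
          have h1 : (∫ y in d..ηs, G y) + h v ≤ π / (1 + ϱ) := by
            rw [← hsplit2, ← hEIeq]; exact hEle
          have h2 : (π - πs) * (1 / (1 + ϱ)) ≤ ∫ y in d..ηs, G y := by
            rw [← heqd]; exact hkey
          have h3 : π / (1 + ϱ) - (π - πs) * (1 / (1 + ϱ)) = c := by
            rw [hc]; field_simp; ring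
          linarith
        have hvL : v ∈ L := by
          refine ⟨⟨le_trans hqsL.1.1 hvqs.le, min_le_right u M⟩, le_antisymm hch ?_⟩
          calc c = h qs := hqsL.2.symm
            _ ≤ h v := hmono_h qs v hvqs.le
        have : v ≤ qs := le_csSup hLbdd hvL
        exact absurd this (not_le.2 hvqs)
      have hsub : {ω | ξ ≤ w₀ - X ω + I (X ω) - π} ⊆ {ω | X ω ≤ qs} := by
        intro ω hω
        simp only [mem_setOf_eq] at hω ⊢
        by_contra hgt; push_neg at hgt
        have hRx : X ω - I (X ω) ≤ d := by rw [hd]; linarith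
        rcases le_or_gt d (X ω) with h' | h'
        · exact hclaim (X ω) hgt h' hRx
        · refine hclaim d (lt_trans hgt h') le_rfl ?_
          have := hInn d hdneg
          linarith
      calc (P {ω | ξ ≤ w₀ - X ω + I (X ω) - π}).toReal
          ≤ (P {ω | X ω ≤ qs}).toReal :=
            ENNReal.toReal_mono (measure_ne_top P _) (measure_mono hsub)
        _ = cdfOf P X qs := rfl
  · -- value identity
    rw [hmain_set]
    rfl
end
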